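/- arXiv:1109.6335 — 7 statements merged into one kernel-verified Lean document; each statement's English description precedes it below -/
import Mathlib

section
/- Let a > 0 and b ≠ 0 be real numbers. Then the function x ↦ x^(−ib) / ((x + a)(x + a + 1)) is (absolutely) integrable on (0, ∞), and ∫₀^∞ x^(−ib) / ((x + a)(x + a + 1)) dx = (π / (i·sinh(πb))) · (a^(−ib) − (a+1)^(−ib)), where a^(−ib) and (a+1)^(−ib) are complex powers of positive reals and sinh is the real hyperbolic sine. -/
open Filter Set MeasureTheory Real
open scoped Interval

/-! ### Auxiliary lemmas -/

lemma zz_cpow_ne {x : ℝ} (hx : 0 < x) (w : ℂ) : (x:ℂ) ^ w ≠ 0 := by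
  simp [Complex.cpow_eq_zero_iff, Complex.ofReal_eq_zero, hx.ne']

lemma zz_cpow_div {x y : ℝ} (hx : 0 ≤ x) (hy : 0 < y) (w : ℂ) :
    ((x / y : ℝ) : ℂ) ^ w = (x:ℂ) ^ w / (y:ℂ) ^ w := by
  rw [div_eq_mul_inv, Complex.ofReal_mul,
    Complex.mul_cpow_ofReal_nonneg hx (by positivity), Complex.ofReal_inv,
    Complex.inv_cpow _ _ (by rw [Complex.arg_ofReal_of_nonneg hy.le]; exact Real.pi_ne_zero.symm),
    div_eq_mul_inv]

lemma zz_ne2 {x c : ℝ} (h : 0 < x + c) : ((x:ℂ) + c) ≠ 0 := by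
  intro hh
  have := congrArg Complex.re hh
  simp at this
  linarith

lemma zz_norm_cpow {x : ℝ} (hx : 0 < x) (b : ℝ) : ‖(x:ℂ) ^ (-(b:ℂ) * Complex.I)‖ = 1 := by
  rw [Complex.norm_cpow_eq_rpow_re_of_pos hx]
  simp

lemma zz_norm_add {x c : ℝ} (h : 0 ≤ x + c) : ‖(x:ℂ) + c‖ = x + c := by
  rw [show (x:ℂ) + c = ((x + c : ℝ) : ℂ) by push_cast; ring, Complex.norm_real,
    Real.norm_of_nonneg h]

lemma zz_cont_cpow (b : ℝ) {x : ℝ} (hx : 0 < x) :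
    ContinuousAt (fun x : ℝ => (x:ℂ) ^ (-(b:ℂ) * Complex.I)) x :=
  (continuousAt_cpow_const (Complex.ofReal_mem_slitPlane.2 hx)).comp
    Complex.continuous_ofReal.continuousAt

/-! ### Change of variables `t ↦ t/(1+t)` to the Beta integral -/

noncomputable def zf : ℝ → ℝ := fun t => t / (1 + t)
noncomputable def zf' : ℝ → ℝ := fun t => ((1 + t) ^ 2)⁻¹
noncomputable def zg (s : ℂ) : ℝ → ℂ := fun x => (x:ℂ) ^ s * (1 - (x:ℂ)) ^ (-s)

lemma zf_deriv {t : ℝ} (ht : t ∈ Ioi (0:ℝ)) :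
    HasDerivWithinAt zf (zf' t) (Ioi (0:ℝ)) t := by
  have h1 : (1 + t) ≠ 0 := by have := mem_Ioi.1 ht; positivity
  have : HasDerivAt zf (((1:ℝ) * (1+t) - t * (0 + 1)) / (1+t)^2) t :=
    (hasDerivAt_id t).div ((hasDerivAt_const t 1).add (hasDerivAt_id t)) h1
  refine this.hasDerivWithinAt.congr_deriv ?_
  simp only [zf']; field_simp; ring

lemma zf_inj : InjOn zf (Ioi (0:ℝ)) := by
  intro x hx y hy h
  have hx' : (1:ℝ) + x ≠ 0 := by have := mem_Ioi.1 hx; positivity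
  have hy' : (1:ℝ) + y ≠ 0 := by have := mem_Ioi.1 hy; positivity
  simp only [zf] at h
  field_simp at h
  linarith

lemma zf_image : zf '' (Ioi (0:ℝ)) = Ioo (0:ℝ) 1 := by
  ext x
  constructor
  · rintro ⟨t, ht, rfl⟩
    have ht' : 0 < t := mem_Ioi.1 ht
    have h1 : (0:ℝ) < 1 + t := by linarith
    simp only [zf]
    exact ⟨by positivity, by rw [div_lt_one h1]; linarith⟩
  · rintro ⟨h0, h1⟩
    refine ⟨x / (1 - x), by rw [mem_Ioi]; exact div_pos h0 (by linarith), ?_⟩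
    have : (1:ℝ) - x ≠ 0 := by linarith
    simp only [zf]
    field_simp
    ring

lemma zf_smul (s : ℂ) {t : ℝ} (ht : t ∈ Ioi (0:ℝ)) :
    |zf' t| • zg s (zf t) = (t:ℂ) ^ s / ((1:ℂ) + t) ^ 2 := by
  have ht' : 0 < t := mem_Ioi.1 ht
  have h1 : (0:ℝ) < 1 + t := by linarith
  have e1 : ((zf t : ℝ) : ℂ) ^ s = (t:ℂ) ^ s / ((1 + t : ℝ):ℂ) ^ s :=
    zz_cpow_div ht'.le h1 s
  have e0 : (1 : ℂ) - ((zf t : ℝ):ℂ) = ((1 / (1 + t) : ℝ) : ℂ) := by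
    rw [← Complex.ofReal_one, ← Complex.ofReal_sub]
    norm_cast
    simp only [zf]; field_simp; ring
  have e2 : ((1:ℂ) - ((zf t : ℝ):ℂ)) ^ (-s) = ((1:ℂ)) ^ (-s) / ((1 + t : ℝ):ℂ) ^ (-s) := by
    rw [e0]; exact zz_cpow_div zero_le_one h1 (-s)
  have hne : ((1 + t : ℝ):ℂ) ^ s ≠ 0 := zz_cpow_ne h1 s
  have habs : |zf' t| = ((1+t)^2)⁻¹ := by
    rw [zf', abs_of_nonneg]; positivity
  rw [zg, e1, e2, habs, Complex.cpow_neg, Complex.one_cpow]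
  rw [Complex.real_smul, Complex.cpow_neg]
  have h2 : ((1+t:ℝ):ℂ) ≠ 0 := by exact_mod_cast h1.ne'
  have h3 : ((1:ℂ) + (t:ℂ)) = ((1+t:ℝ):ℂ) := by push_cast; ring
  rw [h3]
  push_cast [inv_inv]
  have hne' : ((1:ℂ) + (t:ℂ)) ^ s ≠ 0 := by
    rw [show ((1:ℂ)+(t:ℂ)) = ((1+t:ℝ):ℂ) by push_cast; ring]; exact hne
  field_simp

lemma zz_cov (s : ℂ) :
    (∫ x in Ioo (0:ℝ) 1, zg s x) = ∫ t in Ioi (0:ℝ), (t:ℂ) ^ s / ((1:ℂ) + t) ^ 2 := by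
  have := integral_image_eq_integral_abs_deriv_smul measurableSet_Ioi
    (fun t ht => zf_deriv ht) zf_inj (zg s)
  rw [zf_image] at this
  rw [this]
  exact setIntegral_congr_fun measurableSet_Ioi (fun t ht => zf_smul s ht)

lemma zz_Ioo_int {s : ℂ} (hs : s.re = 0) : IntegrableOn (zg s) (Ioo (0:ℝ) 1) := by
  have h := Complex.betaIntegral_convergent (u := 1+s) (v := 1-s)
    (by simp [hs]) (by simp [hs])
  rw [intervalIntegrable_iff_integrableOn_Ioo_of_le zero_le_one] at h
  exact h.congr_fun (fun x hx => by simp only [zg, add_sub_cancel_left,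
    show (1:ℂ)-s-1 = -s by ring]) measurableSet_Ioo

lemma zz_beta_val {s : ℂ} (hs : s.re = 0) :
    ∫ x in Ioo (0:ℝ) 1, zg s x = Complex.Gamma (1+s) * Complex.Gamma (1-s) := by
  have h := Complex.Gamma_mul_Gamma_eq_betaIntegral (s := 1+s) (t := 1-s)
    (by simp [hs]) (by simp [hs])
  rw [show (1+s)+(1-s) = 2 by ring] at h
  have hΓ2 : Complex.Gamma 2 = 1 := by
    rw [show (2:ℂ) = 1+1 by norm_num, Complex.Gamma_add_one 1 one_ne_zero,
      Complex.Gamma_one, mul_one]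
  rw [hΓ2, one_mul] at h
  rw [h, Complex.betaIntegral, intervalIntegral.integral_of_le zero_le_one,
    integral_Ioc_eq_integral_Ioo]
  exact setIntegral_congr_fun measurableSet_Ioo (fun x hx => by
    simp only [zg, add_sub_cancel_left, show (1:ℂ)-s-1 = -s by ring])

lemma zz_K_val (b : ℝ) (hb : b ≠ 0) :
    Complex.Gamma (1 + (-(b:ℂ) * Complex.I)) * Complex.Gamma (1 - (-(b:ℂ) * Complex.I))
      = (Real.pi * b : ℝ) / (Real.sinh (Real.pi * b) : ℝ) := by
  set s : ℂ := -(b:ℂ) * Complex.I with hsdef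
  have hs0 : s ≠ 0 := by
    simp [hsdef, Complex.I_ne_zero, Complex.ofReal_eq_zero, hb]
  have h1 : Complex.Gamma (1 + s) = s * Complex.Gamma s := by
    rw [add_comm, Complex.Gamma_add_one s hs0]
  have h2 : Complex.Gamma s * Complex.Gamma (1 - s) = ↑Real.pi / Complex.sin (↑Real.pi * s) :=
    Complex.Gamma_mul_Gamma_one_sub s
  have hsin : Complex.sin (↑Real.pi * s) = -(Real.sinh (Real.pi * b) : ℝ) * Complex.I := by
    have : (↑Real.pi : ℂ) * s = (-(Real.pi * b : ℝ) : ℂ) * Complex.I := by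
      rw [hsdef]; push_cast; ring
    rw [this, Complex.sin_mul_I, Complex.sinh_neg, ← Complex.ofReal_sinh]
  have hsh : (Real.sinh (Real.pi * b) : ℂ) ≠ 0 := by
    exact_mod_cast (Real.sinh_ne_zero.2 (mul_ne_zero Real.pi_ne_zero hb))
  rw [h1, mul_assoc, h2, hsin, hsdef, mul_div_assoc']
  rw [div_eq_div_iff (mul_ne_zero (neg_ne_zero.2 hsh) Complex.I_ne_zero) hsh]
  push_cast
  ring_nf

/-! ### Scaling -/

lemma zz_scale {c : ℝ} (hc : 0 < c) (s : ℂ) :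
    ∫ x in Ioi (0:ℝ), (x:ℂ) ^ s / ((x:ℂ) + c) ^ 2
      = (c:ℂ) ^ (s - 1) * ∫ t in Ioi (0:ℝ), (t:ℂ) ^ s / ((1:ℂ) + t) ^ 2 := by
  have h := MeasureTheory.integral_comp_mul_left_Ioi
    (g := fun x : ℝ => (x:ℂ) ^ s / ((x:ℂ) + c) ^ 2) 0 hc
  rw [mul_zero] at h
  have hcC : (c:ℂ) ≠ 0 := by exact_mod_cast hc.ne'
  calc ∫ x in Ioi (0:ℝ), (x:ℂ) ^ s / ((x:ℂ) + c) ^ 2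
      = (c:ℝ) • ∫ x in Ioi (0:ℝ), ((c*x:ℝ):ℂ) ^ s / (((c*x:ℝ):ℂ) + c) ^ 2 := by
        rw [h, smul_smul, mul_inv_cancel₀ hc.ne', one_smul]
    _ = (c:ℝ) • ∫ x in Ioi (0:ℝ), ((c:ℂ) ^ s / ((c:ℂ))^2) * ((x:ℂ) ^ s / ((1:ℂ) + x) ^ 2) := by
        refine congrArg _ (setIntegral_congr_fun measurableSet_Ioi (fun x hx => ?_))
        have hx' : 0 < x := mem_Ioi.1 hx
        have e1 : ((c*x:ℝ):ℂ) ^ s = (c:ℂ) ^ s * (x:ℂ) ^ s := by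
          rw [Complex.ofReal_mul, Complex.mul_cpow_ofReal_nonneg hc.le hx'.le]
        have e2 : (((c*x:ℝ):ℂ) + c) ^ 2 = (c:ℂ)^2 * ((1:ℂ) + x) ^ 2 := by
          push_cast; ring
        rw [e1, e2]
        field_simp
    _ = (c:ℂ) ^ (s - 1) * ∫ t in Ioi (0:ℝ), (t:ℂ) ^ s / ((1:ℂ) + t) ^ 2 := by
        rw [MeasureTheory.integral_const_mul, Complex.real_smul, ← mul_assoc]
        congr 1
        rw [Complex.cpow_sub _ _ hcC, Complex.cpow_one]
        field_simp

/-! ### Partial fractions via an inner integral -/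

lemma zz_inner {a x : ℝ} (ha : 0 < a) (hx : 0 < x) (s : ℂ) :
    ∫ c in Ioc a (a+1), (x:ℂ) ^ s / ((x:ℂ) + c) ^ 2
      = (x:ℂ) ^ s / (((x:ℂ) + a) * ((x:ℂ) + a + 1)) := by
  have hle : a ≤ a + 1 := by linarith
  have hne : ∀ c : ℝ, c ∈ [[a, a+1]] → ((x:ℂ) + c) ≠ 0 := by
    intro c hc
    rw [uIcc_of_le hle] at hc
    exact zz_ne2 (by have := hc.1; linarith)
  have hd : ∀ c ∈ [[a, a+1]], HasDerivAt (fun c : ℝ => -(((x:ℂ) + c)⁻¹))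
      ((((x:ℂ) + c) ^ 2)⁻¹) c := by
    intro c hc
    have hb : HasDerivAt (fun c : ℝ => ((x:ℂ) + c)) 1 c := by
      simpa using (Complex.ofRealCLM.hasDerivAt (x := c)).const_add (x:ℂ)
    have := ((hasDerivAt_inv (hne c hc)).comp c hb).neg
    refine this.congr_deriv ?_
    ring
  have hcont : IntervalIntegrable (fun c : ℝ => (((x:ℂ) + c) ^ 2)⁻¹) volume a (a+1) := by
    apply ContinuousOn.intervalIntegrable
    exact (((continuous_const.add Complex.continuous_ofReal).pow 2).continuousOn).inv₀
      (fun c hc => pow_ne_zero 2 (hne c hc))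
  have hJ : ∫ c in a..(a+1), (((x:ℂ) + c) ^ 2)⁻¹
      = ((x:ℂ) + a)⁻¹ - ((x:ℂ) + a + 1)⁻¹ := by
    rw [intervalIntegral.integral_eq_sub_of_hasDerivAt hd hcont]
    have h1 : ((x:ℂ) + ((a:ℝ)+1:ℝ)) = (x:ℂ) + a + 1 := by push_cast; ring
    rw [h1]; ring
  have hxa : ((x:ℂ) + a) ≠ 0 := zz_ne2 (by linarith)
  have hxa1 : ((x:ℂ) + a + 1) ≠ 0 := by
    have : ((x:ℂ) + ((a+1:ℝ):ℂ)) ≠ 0 := zz_ne2 (by linarith)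
    push_cast at this; convert this using 1; ring
  rw [← intervalIntegral.integral_of_le hle]
  simp_rw [div_eq_mul_inv]
  rw [intervalIntegral.integral_const_mul, hJ]
  field_simp
  ring

/-! ### Integrability -/

lemma zz_int_base {a : ℝ} (ha : 0 < a) :
    IntegrableOn (fun x : ℝ => ((x + a) ^ 2)⁻¹) (Ioi (0:ℝ)) := by
  have h0 : IntegrableOn (fun t : ℝ => t ^ (-2:ℝ)) (Ioi a) :=
    integrableOn_Ioi_rpow_of_lt (by norm_num) ha
  have h1 : IntegrableOn (fun t : ℝ => (t ^ 2)⁻¹) (Ioi a) := by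
    refine h0.congr_fun (fun t ht => ?_) measurableSet_Ioi
    have ht' : 0 < t := lt_trans ha (mem_Ioi.1 ht)
    rw [← Real.rpow_natCast t 2, ← Real.rpow_neg ht'.le]
    norm_num
  have h2 : Integrable ((Ioi a).indicator (fun t : ℝ => (t ^ 2)⁻¹)) volume :=
    (integrable_indicator_iff measurableSet_Ioi).2 h1
  have h3 := h2.comp_add_right a
  have h4 : (fun x : ℝ => (Ioi a).indicator (fun t : ℝ => (t ^ 2)⁻¹) (x + a))
      = (Ioi (0:ℝ)).indicator (fun x : ℝ => ((x + a) ^ 2)⁻¹) := by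
    funext x
    by_cases hx : 0 < x
    · rw [indicator_of_mem (by simpa using hx), indicator_of_mem (by simp [mem_Ioi, hx])]
    · rw [indicator_of_notMem (by simpa using hx),
        indicator_of_notMem (by simp [mem_Ioi]; simpa using hx)]
  rw [h4] at h3
  exact (integrable_indicator_iff measurableSet_Ioi).1 h3

lemma zz_main_integrable (a b : ℝ) (ha : 0 < a) :
    IntegrableOn
      (fun x : ℝ => (x : ℂ) ^ (-(b : ℂ) * Complex.I) / ((x + a) * (x + a + 1)))
      (Set.Ioi (0 : ℝ)) := by
  have hsm : AEStronglyMeasurable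
      (fun x : ℝ => (x : ℂ) ^ (-(b : ℂ) * Complex.I) / ((x + a) * (x + a + 1)))
      (volume.restrict (Ioi (0:ℝ))) := by
    refine ContinuousOn.aestronglyMeasurable ?_ measurableSet_Ioi
    intro x hx
    have hx' : 0 < x := mem_Ioi.1 hx
    refine ContinuousWithinAt.div ((zz_cont_cpow b hx').continuousWithinAt) ?_ ?_
    · exact (((Complex.continuous_ofReal.add continuous_const).mul
        ((Complex.continuous_ofReal.add continuous_const).add
          continuous_const)).continuousAt).continuousWithinAt
    · exact mul_ne_zero (zz_ne2 (by linarith)) (by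
        have : ((x:ℂ) + ((a+1:ℝ):ℂ)) ≠ 0 := zz_ne2 (by linarith)
        push_cast at this; convert this using 1; ring)
  refine Integrable.mono' (zz_int_base ha) hsm ?_
  rw [ae_restrict_iff' measurableSet_Ioi]
  refine ae_of_all _ (fun x hx => ?_)
  have hx' : 0 < x := mem_Ioi.1 hx
  rw [norm_div, zz_norm_cpow hx' b, norm_mul, zz_norm_add (by linarith)]
  have h1 : ((x:ℂ) + a + 1) = ((x + (a+1) : ℝ) : ℂ) := by push_cast; ring
  rw [h1, Complex.norm_real, Real.norm_of_nonneg (by linarith)]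
  rw [one_div]
  apply inv_anti₀ (by positivity)
  nlinarith

lemma zz_prod_integrable (a b : ℝ) (ha : 0 < a) :
    Integrable
      (fun p : ℝ × ℝ => ((p.1:ℂ)) ^ (-(b:ℂ) * Complex.I) / ((p.1:ℂ) + p.2) ^ 2)
      ((volume.restrict (Ioi (0:ℝ))).prod (volume.restrict (Ioc a (a+1)))) := by
  have hmeas : (volume.restrict (Ioi (0:ℝ))).prod (volume.restrict (Ioc a (a+1)))
      = (volume : Measure (ℝ × ℝ)).restrict ((Ioi (0:ℝ)) ×ˢ (Ioc a (a+1))) := by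
    rw [Measure.volume_eq_prod, Measure.prod_restrict]
  rw [hmeas]
  have hsm : AEStronglyMeasurable
      (fun p : ℝ × ℝ => ((p.1:ℂ)) ^ (-(b:ℂ) * Complex.I) / ((p.1:ℂ) + p.2) ^ 2)
      ((volume : Measure (ℝ × ℝ)).restrict ((Ioi (0:ℝ)) ×ˢ (Ioc a (a+1)))) := by
    refine ContinuousOn.aestronglyMeasurable ?_ (measurableSet_Ioi.prod measurableSet_Ioc)
    intro p hp
    have hp1 : 0 < p.1 := mem_Ioi.1 hp.1
    have hp2 : a < p.2 := hp.2.1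
    refine ContinuousWithinAt.div ?_ ?_ ?_
    · exact ((zz_cont_cpow b hp1).comp continuous_fst.continuousAt).continuousWithinAt
    · exact (((Complex.continuous_ofReal.comp continuous_fst).add
        (Complex.continuous_ofReal.comp continuous_snd)).pow 2).continuousWithinAt
    · exact pow_ne_zero 2 (zz_ne2 (by linarith))
  have hbound : Integrable (fun p : ℝ × ℝ => ((p.1 + a) ^ 2)⁻¹ * (1:ℝ))
      ((volume.restrict (Ioi (0:ℝ))).prod (volume.restrict (Ioc a (a+1)))) := by
    refine Integrable.mul_prod (g := fun _ : ℝ => (1:ℝ)) (zz_int_base ha) ?_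
    exact integrableOn_const measure_Ioc_lt_top.ne
  rw [hmeas] at hbound
  refine Integrable.mono' (by simpa using hbound) hsm ?_
  rw [ae_restrict_iff' (measurableSet_Ioi.prod measurableSet_Ioc)]
  refine ae_of_all _ (fun p hp => ?_)
  have hp1 : 0 < p.1 := mem_Ioi.1 hp.1
  have hp2 : a < p.2 := hp.2.1
  rw [norm_div, zz_norm_cpow hp1 b, norm_pow, zz_norm_add (by linarith), one_div]
  apply inv_anti₀ (by positivity)
  apply pow_le_pow_left₀ (by linarith)
  linarith

/-! ### Main theorem -/

theorem zeta_stmt_4 (a b : ℝ) (ha : 0 < a) (hb : b ≠ 0) :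
    IntegrableOn
      (fun x : ℝ => (x : ℂ) ^ (-(b : ℂ) * Complex.I) / ((x + a) * (x + a + 1)))
      (Set.Ioi (0 : ℝ)) ∧
    ∫ x in Set.Ioi (0 : ℝ), (x : ℂ) ^ (-(b : ℂ) * Complex.I) / ((x + a) * (x + a + 1)) =
      (Real.pi / (Complex.I * Real.sinh (Real.pi * b))) *
        ((a : ℂ) ^ (-(b : ℂ) * Complex.I) - ((a : ℂ) + 1) ^ (-(b : ℂ) * Complex.I)) := by
  refine ⟨zz_main_integrable a b ha, ?_⟩
  set s : ℂ := -(b:ℂ) * Complex.I with hsdef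
  have hs0 : s ≠ 0 := by
    simp [hsdef, Complex.I_ne_zero, Complex.ofReal_eq_zero, hb]
  have hsre : s.re = 0 := by simp [hsdef]
  have hK : (∫ t in Ioi (0:ℝ), (t:ℂ) ^ s / ((1:ℂ) + t) ^ 2)
      = ((Real.pi * b : ℝ) : ℂ) / ((Real.sinh (Real.pi * b) : ℝ) : ℂ) := by
    rw [← zz_cov s, zz_beta_val hsre]
    exact zz_K_val b hb
  have h1 : (∫ x in Ioi (0:ℝ), (x:ℂ) ^ s / (((x:ℂ) + a) * ((x:ℂ) + a + 1)))
      = ∫ x in Ioi (0:ℝ), ∫ c in Ioc a (a+1), (x:ℂ) ^ s / ((x:ℂ) + c) ^ 2 :=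
    setIntegral_congr_fun measurableSet_Ioi
      (fun x hx => (zz_inner ha (mem_Ioi.1 hx) s).symm)
  have h2 : (∫ x in Ioi (0:ℝ), ∫ c in Ioc a (a+1), (x:ℂ) ^ s / ((x:ℂ) + c) ^ 2)
      = ∫ c in Ioc a (a+1), ∫ x in Ioi (0:ℝ), (x:ℂ) ^ s / ((x:ℂ) + c) ^ 2 :=
    MeasureTheory.integral_integral_swap (zz_prod_integrable a b ha)
  have h3 : (∫ c in Ioc a (a+1), ∫ x in Ioi (0:ℝ), (x:ℂ) ^ s / ((x:ℂ) + c) ^ 2)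
      = ∫ c in Ioc a (a+1), (c:ℂ) ^ (s-1)
          * ∫ t in Ioi (0:ℝ), (t:ℂ) ^ s / ((1:ℂ) + t) ^ 2 :=
    setIntegral_congr_fun measurableSet_Ioc (fun c hc => zz_scale (ha.trans hc.1) s)
  have h4 : (∫ c in Ioc a (a+1), (c:ℂ) ^ (s-1)
        * ∫ t in Ioi (0:ℝ), (t:ℂ) ^ s / ((1:ℂ) + t) ^ 2)
      = (∫ c in Ioc a (a+1), (c:ℂ) ^ (s-1))
          * ∫ t in Ioi (0:ℝ), (t:ℂ) ^ s / ((1:ℂ) + t) ^ 2 :=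
    MeasureTheory.integral_mul_const _ _
  have h5 : (∫ c in Ioc a (a+1), (c:ℂ) ^ (s-1))
      = (((a+1:ℝ):ℂ) ^ s - (a:ℂ) ^ s) / s := by
    rw [← intervalIntegral.integral_of_le (by linarith : a ≤ a + 1)]
    rw [integral_cpow (Or.inr ⟨by
        intro h
        apply hs0
        have : s = (s - 1) + 1 := by ring
        rw [this, h]; ring, by
        rw [uIcc_of_le (by linarith : a ≤ a + 1)]
        intro h
        have := h.1
        linarith⟩)]
    rw [sub_add_cancel]
  rw [h1, h2, h3, h4, h5, hK]
  have hsh : ((Real.sinh (Real.pi * b) : ℝ) : ℂ) ≠ 0 := by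
    exact_mod_cast (Real.sinh_ne_zero.2 (mul_ne_zero Real.pi_ne_zero hb))
  have hbC : (b:ℂ) ≠ 0 := by exact_mod_cast hb
  have hcast : ((a+1:ℝ):ℂ) = (a:ℂ) + 1 := by push_cast; ring
  rw [hcast, hsdef]
  rw [div_mul_div_comm, div_mul_eq_mul_div]
  rw [div_eq_div_iff (mul_ne_zero (by rw [← hsdef]; exact hs0) hsh)
    (mul_ne_zero Complex.I_ne_zero hsh)]
  push_cast
  ring
end

section
/- Let x > 0 be a real number. Then the series Σ_{n=0}^∞ 1/((2n + x + 1)(2n + x + 2)) converges and its sum equals (1/2)·(ψ(x/2 + 1) − ψ((x+1)/2)), where ψ denotes the digamma function ψ(t) = Γ'(t)/Γ(t) of the real Gamma function Γ. -/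
open Filter Set

/-- The digamma function ψ(t) = Γ'(t)/Γ(t) of the real Gamma function. -/
noncomputable def digamma (t : ℝ) : ℝ := deriv Real.Gamma t / Real.Gamma t

open Topology

-- summability of 1/(k+1)^2
lemma aux_sq_summable : Summable (fun k : ℕ => 1 / ((k : ℝ) + 1) ^ 2) := by
  have h := Real.summable_one_div_nat_pow.mpr (one_lt_two (α := ℕ))
  have := (summable_nat_add_iff 1).mpr h
  refine this.congr fun k => ?_
  push_cast
  ring

-- log(n+1) - log n → 0
lemma aux_log_succ_sub : Tendsto (fun n : ℕ => Real.log (n + 1) - Real.log n) atTop (𝓝 0) := by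
  have h1 : Tendsto (fun n : ℕ => ((n : ℝ) + 1) / n) atTop (𝓝 1) := by
    have := tendsto_const_div_atTop_nhds_zero_nat (1:ℝ)
    have h2 := this.const_add 1
    simp only [add_zero] at h2
    refine h2.congr' ?_
    filter_upwards [eventually_gt_atTop 0] with n hn
    field_simp
  have h2 : Tendsto (fun n : ℕ => Real.log (((n : ℝ) + 1) / n)) atTop (𝓝 0) := by
    have := (Real.continuousAt_log (by norm_num : (1:ℝ) ≠ 0)).tendsto.comp h1
    simpa [Function.comp_def] using this
  refine h2.congr' ?_
  filter_upwards [eventually_gt_atTop 0] with n hn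
  rw [Real.log_div (by positivity) (by exact_mod_cast hn.ne')]

-- the constant part:  log n - ∑_{k<n+1} 1/(k+1) → -γ
lemma aux_const_tendsto :
    Tendsto (fun n : ℕ => Real.log n - ∑ k ∈ Finset.range (n + 1), 1 / ((k : ℝ) + 1)) atTop
      (𝓝 (-Real.eulerMascheroniConstant)) := by
  have hh : ∀ n : ℕ, ∑ k ∈ Finset.range (n + 1), 1 / ((k : ℝ) + 1) = (harmonic (n + 1) : ℝ) := by
    intro n
    rw [harmonic]
    push_cast
    simp [one_div]
  have h1 : Tendsto (fun n : ℕ => (harmonic (n+1) : ℝ) - Real.log (n+1)) atTop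
      (𝓝 Real.eulerMascheroniConstant) := by
    have := Real.tendsto_harmonic_sub_log.comp (tendsto_add_atTop_nat 1)
    refine this.congr fun n => ?_
    simp only [Function.comp]
    push_cast
    ring_nf
  have h2 := (h1.neg.sub aux_log_succ_sub)
  rw [sub_zero] at h2
  refine h2.congr fun n => ?_
  rw [hh]
  push_cast
  ring

theorem test : True := trivial

lemma digamma_tendsto {t : ℝ} (ht : 0 < t) :
    Tendsto (fun n : ℕ => Real.log n - ∑ k ∈ Finset.range (n + 1), 1 / (t + k)) atTop
      (𝓝 (digamma t)) := by
  set s : Set ℝ := Ioo (t / 2) (t + 1) with hs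
  have hst : t ∈ s := ⟨by linarith, by linarith⟩
  have hsopen : IsOpen s := isOpen_Ioo
  have hspos : ∀ y ∈ s, 0 < y := fun y hy => lt_trans (by linarith) hy.1
  -- the functions
  set F : ℕ → ℝ → ℝ := fun n y =>
    y * Real.log n + Real.log (n.factorial) - ∑ k ∈ Finset.range (n + 1), Real.log (y + k) with hF
  set F' : ℕ → ℝ → ℝ := fun n y =>
    Real.log n - ∑ k ∈ Finset.range (n + 1), 1 / (y + k) with hF'
  set u : ℕ → ℝ → ℝ := fun k y => 1 / ((k : ℝ) + 1) - 1 / (y + k) with hu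
  set G' : ℝ → ℝ := fun y => -Real.eulerMascheroniConstant + ∑' k : ℕ, u k y with hG'
  -- derivative facts
  have hderiv : ∀ n : ℕ, ∀ y ∈ s, HasDerivAt (F n) (F' n y) y := by
    intro n y hy
    have hy0 := hspos y hy
    have hsum : HasDerivAt (fun y : ℝ => ∑ k ∈ Finset.range (n + 1), Real.log (y + k))
        (∑ k ∈ Finset.range (n + 1), 1 / (y + k)) y := by
      refine HasDerivAt.fun_sum fun k _ => ?_
      have h1 : HasDerivAt (fun y : ℝ => y + (k : ℝ)) 1 y := (hasDerivAt_id y).add_const _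
      have h2 := (Real.hasDerivAt_log (by positivity : y + (k:ℝ) ≠ 0)).comp y h1
      simpa [Function.comp_def] using h2
    have hlin : HasDerivAt (fun y : ℝ => y * Real.log n + Real.log (n.factorial)) (Real.log n) y := by
      simpa using ((hasDerivAt_id y).mul_const (Real.log n)).add_const (Real.log (n.factorial))
    simpa [hF, hF', Pi.sub_def] using hlin.sub hsum
  -- uniform convergence of F'
  have hbound : ∀ k : ℕ, ∀ y ∈ s, ‖u k y‖ ≤ (t + 3) * (1 / ((k + 1) * (t / 2 + k))) := by
    intro k y hy
    have hy1 : t / 2 < y := hy.1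
    have hy2 : y < t + 1 := hy.2
    have hyk : (0:ℝ) < y + k := by
      have : (0:ℝ) ≤ (k:ℝ) := Nat.cast_nonneg k
      linarith [hspos y hy]
    have htk : (0:ℝ) < t / 2 + k := by
      have : (0:ℝ) ≤ (k:ℝ) := Nat.cast_nonneg k
      linarith
    have hk1 : (0:ℝ) < (k:ℝ) + 1 := by positivity
    have hval : u k y = (y - 1) / (((k : ℝ) + 1) * (y + k)) := by
      rw [hu]
      field_simp
      ring
    rw [hval, norm_div, Real.norm_eq_abs, Real.norm_eq_abs,
      abs_of_pos (by positivity : (0:ℝ) < ((k:ℝ)+1) * (y + k)), mul_one_div]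
    have h1 : |y - 1| ≤ t + 3 := by
      rw [abs_le]; constructor <;> nlinarith
    refine div_le_div₀ (by linarith) h1 (by positivity) ?_
    have : t / 2 + (k:ℝ) ≤ y + k := by linarith
    nlinarith
  -- summable majorant
  have hMsum : Summable (fun k : ℕ => (t + 3) * (1 / (((k:ℝ) + 1) * (t / 2 + k)))) := by
    refine Summable.mul_left _ ?_
    refine Summable.of_nonneg_of_le (fun k => by positivity)
      (fun k => ?_) (aux_sq_summable.mul_left ((t + 2) / t))
    have hk1 : (0:ℝ) < (k:ℝ) + 1 := by positivity
    have htk : (0:ℝ) < t / 2 + k := by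
      have : (0:ℝ) ≤ (k:ℝ) := Nat.cast_nonneg k
      linarith
    rw [mul_one_div, div_le_div_iff₀ (by positivity) (by positivity), div_mul_eq_mul_div,
      le_div_iff₀ ht]
    have hk0 : (0:ℝ) ≤ (k:ℝ) := Nat.cast_nonneg k
    nlinarith [sq_nonneg ((k:ℝ)+1), mul_nonneg hk0 (sq_nonneg t)]
  have hUnifU : TendstoUniformlyOn (fun N y => ∑ k ∈ Finset.range N, u k y)
      (fun y => ∑' k, u k y) atTop s := tendstoUniformlyOn_tsum_nat hMsum hbound
  have hUnifU1 : TendstoUniformlyOn (fun N y => ∑ k ∈ Finset.range (N + 1), u k y)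
      (fun y => ∑' k, u k y) atTop s := by
    intro v hv
    exact (tendsto_add_atTop_nat 1).eventually (hUnifU v hv)
  have hconst : TendstoUniformlyOn
      (fun (n : ℕ) (_ : ℝ) => Real.log n - ∑ k ∈ Finset.range (n + 1), 1 / ((k:ℝ) + 1))
      (fun _ => -Real.eulerMascheroniConstant) atTop s := by
    rw [Metric.tendstoUniformlyOn_iff]
    intro ε hε
    filter_upwards [Metric.tendsto_nhds.mp aux_const_tendsto ε hε] with n hn y _
    rw [dist_comm]; exact hn
  have hUnifF' : TendstoUniformlyOn F' G' atTop s := by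
    have h := hconst.add hUnifU1
    refine h.congr (Eventually.of_forall fun n y hy => ?_)
    rw [hF', hu]
    simp only [Pi.add_apply, Finset.sum_sub_distrib]
    ring
  -- pointwise convergence of F to log ∘ Gamma
  have hpt : ∀ y ∈ s, Tendsto (fun n => F n y) atTop (𝓝 (Real.log (Real.Gamma y))) := by
    intro y hy
    have hy0 := hspos y hy
    have hGpos := Real.Gamma_pos_of_pos hy0
    have h := (Real.continuousAt_log hGpos.ne').tendsto.comp (Real.GammaSeq_tendsto_Gamma y)
    refine h.congr' ?_
    filter_upwards [eventually_gt_atTop 0] with n hn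
    show Real.log (Real.GammaSeq y n) = F n y
    have hprod : (0:ℝ) < ∏ j ∈ Finset.range (n + 1), (y + j) :=
      Finset.prod_pos fun j _ => by positivity
    have hn0 : (0:ℝ) < (n:ℝ) := by exact_mod_cast hn
    have hfac : (0:ℝ) < (n.factorial : ℝ) := by exact_mod_cast n.factorial_pos
    rw [Real.GammaSeq, Real.log_div (by positivity) hprod.ne',
      Real.log_mul (by positivity) hfac.ne', Real.log_rpow hn0,
      Real.log_prod (fun j _ => by positivity)]
  have hmain : HasDerivAt (fun y => Real.log (Real.Gamma y)) (G' t) t :=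
    hasDerivAt_of_tendstoUniformlyOn hsopen hUnifF'
      (Eventually.of_forall fun n y hy => hderiv n y hy) hpt hst
  have hdig : HasDerivAt (fun y => Real.log (Real.Gamma y)) (digamma t) t := by
    have hdiff : DifferentiableAt ℝ Real.Gamma t := by
      refine Real.differentiableAt_Gamma fun m => ?_
      have : (0:ℝ) ≤ (m:ℝ) := Nat.cast_nonneg m
      intro h; rw [h] at ht; linarith
    exact hdiff.hasDerivAt.log (Real.Gamma_pos_of_pos ht).ne'
  have hGt : G' t = digamma t := hmain.unique hdig
  have hfin := hUnifF'.tendsto_at hst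
  rw [hGt] at hfin
  exact hfin

theorem zeta_stmt_5 (x : ℝ) (hx : 0 < x) :
    HasSum (fun n : ℕ => 1 / ((2 * n + x + 1) * (2 * n + x + 2)))
      ((1 / 2) * (digamma (x / 2 + 1) - digamma ((x + 1) / 2))) := by
  set f : ℕ → ℝ := fun n => 1 / ((2 * n + x + 1) * (2 * n + x + 2)) with hf
  have ha : (0:ℝ) < x / 2 + 1 := by linarith
  have hb : (0:ℝ) < (x + 1) / 2 := by linarith
  have hfact : ∀ k : ℕ, 1 / ((x + 1) / 2 + k) - 1 / ((x / 2 + 1) + k) = 2 * f k := by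
    intro k
    have h1 : (0:ℝ) < 2 * k + x + 1 := by positivity
    have h2 : (0:ℝ) < 2 * k + x + 2 := by positivity
    rw [hf]
    field_simp
    ring
  have hT : Tendsto (fun n : ℕ => ∑ k ∈ Finset.range (n + 1), f k) atTop
      (𝓝 ((1 / 2) * (digamma (x / 2 + 1) - digamma ((x + 1) / 2)))) := by
    have h := ((digamma_tendsto ha).sub (digamma_tendsto hb)).const_mul (1/2 : ℝ)
    refine h.congr fun n => ?_
    have h2 : ∑ k ∈ Finset.range (n + 1), (1 / ((x + 1) / 2 + k) - 1 / ((x / 2 + 1) + k))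
        = ∑ k ∈ Finset.range (n + 1), 2 * f k := Finset.sum_congr rfl fun k _ => hfact k
    rw [Finset.sum_sub_distrib, ← Finset.mul_sum] at h2
    linarith [h2]
  have hsummable : Summable f := by
    refine Summable.of_nonneg_of_le (fun k => by positivity) (fun k => ?_) aux_sq_summable
    have h1 : (0:ℝ) < (k:ℝ) + 1 := by positivity
    have hk0 : (0:ℝ) ≤ (k:ℝ) := Nat.cast_nonneg k
    rw [hf, div_le_div_iff₀ (by positivity) (by positivity)]
    nlinarith
  have hT2 : Tendsto (fun n : ℕ => ∑ k ∈ Finset.range (n + 1), f k) atTop (𝓝 (∑' k, f k)) :=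
    hsummable.hasSum.tendsto_sum_nat.comp (tendsto_add_atTop_nat 1)
  have := tendsto_nhds_unique hT2 hT
  rw [← this]
  exact hsummable.hasSum
end

section
/- Let x > 0 be a real number. Then the partial sums of the alternating series Σ_{n=0}^∞ (−1)^n / (x + n + 1) converge, and their limit equals (1/2)·(ψ(x/2 + 1) − ψ((x+1)/2)), where ψ denotes the digamma function ψ(t) = Γ'(t)/Γ(t) of the real Gamma function Γ. That is, lim_{N→∞} Σ_{n=0}^{N−1} (−1)^n/(x + n + 1) = (1/2)·(ψ(x/2 + 1) − ψ((x+1)/2)). -/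
open Filter Set

private lemma aux_ne {t : ℝ} (ht : 0 < t) : ∀ m : ℕ, t ≠ -m := by
  intro m
  have : (0:ℝ) ≤ m := Nat.cast_nonneg m
  intro h; rw [h] at ht; linarith

private lemma aux_diff {t : ℝ} (ht : 0 < t) :
    DifferentiableAt ℝ (Real.log ∘ Real.Gamma) t :=
  (Real.differentiableAt_Gamma (aux_ne ht)).log (Real.Gamma_pos_of_pos ht).ne'

private lemma digamma_eq {t : ℝ} (ht : 0 < t) :
    digamma t = deriv (Real.log ∘ Real.Gamma) t := by
  rw [digamma, Function.comp_def,
    deriv.log (Real.differentiableAt_Gamma (aux_ne ht)) (Real.Gamma_pos_of_pos ht).ne']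

private lemma deriv_rec {t : ℝ} (ht : 0 < t) :
    deriv (Real.log ∘ Real.Gamma) (t + 1) = deriv (Real.log ∘ Real.Gamma) t + 1 / t := by
  set f := Real.log ∘ Real.Gamma with hf
  have h_rec : ∀ y : ℝ, 0 < y → f (y + 1) = f y + Real.log y := by
    intro y hy
    simp only [f, Function.comp_apply, Real.Gamma_add_one hy.ne',
      Real.log_mul hy.ne' (Real.Gamma_pos_of_pos hy).ne', add_comm]
  rw [← deriv_comp_add_const, one_div, ← Real.deriv_log,
    ← deriv_add (aux_diff (by positivity)) (Real.differentiableAt_log ht.ne')]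
  apply Filter.EventuallyEq.deriv_eq
  filter_upwards [eventually_gt_nhds ht] using h_rec

private lemma deriv_mono {a b : ℝ} (ha : 0 < a) (hab : a < b) :
    deriv (Real.log ∘ Real.Gamma) a ≤ deriv (Real.log ∘ Real.Gamma) b := by
  have hb : 0 < b := ha.trans hab
  exact (Real.convexOn_log_Gamma.deriv_le_slope (mem_Ioi.2 ha) (mem_Ioi.2 hb) hab
    (aux_diff ha)).trans
    (Real.convexOn_log_Gamma.slope_le_deriv (mem_Ioi.2 ha) (mem_Ioi.2 hb) hab (aux_diff hb))

theorem zeta_stmt_6 (x : ℝ) (hx : 0 < x) :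
    Tendsto (fun N : ℕ => ∑ n ∈ Finset.range N, (-1 : ℝ) ^ n / (x + n + 1)) atTop
      (nhds ((1 / 2) * (digamma (x / 2 + 1) - digamma ((x + 1) / 2)))) := by
  set g := deriv (Real.log ∘ Real.Gamma) with hg
  set L : ℝ := (1 / 2) * (digamma (x / 2 + 1) - digamma ((x + 1) / 2)) with hL
  have hLg : L = (1 / 2) * (g (x / 2 + 1) - g ((x + 1) / 2)) := by
    rw [hL, digamma_eq (by linarith), digamma_eq (by linarith)]
  set S : ℕ → ℝ := fun N => ∑ n ∈ Finset.range N, (-1 : ℝ) ^ n / (x + n + 1) with hS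
  -- even partial sums formula
  have key : ∀ N : ℕ, S (2 * N) = L - (1 / 2) * (g (x / 2 + 1 + N) - g ((x + 1) / 2 + N)) := by
    intro N
    induction N with
    | zero => simp [hS, hLg]
    | succ N ih =>
      have h1 : (0:ℝ) < x / 2 + 1 + N := by positivity
      have h2 : (0:ℝ) < (x + 1) / 2 + N := by positivity
      have e1 : g (x / 2 + 1 + (N + 1 : ℕ)) = g (x / 2 + 1 + N) + 1 / (x / 2 + 1 + N) := by
        push_cast
        rw [← add_assoc]; exact deriv_rec h1
      have e2 : g ((x + 1) / 2 + (N + 1 : ℕ)) = g ((x + 1) / 2 + N) + 1 / ((x + 1) / 2 + N) := by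
        push_cast
        rw [← add_assoc]; exact deriv_rec h2
      have hsum : S (2 * (N + 1)) = S (2 * N)
          + 1 / (x + 2 * N + 1) - 1 / (x + 2 * N + 2) := by
        simp only [hS, show 2 * (N + 1) = (2 * N + 1) + 1 from by ring,
          Finset.sum_range_succ]
        have hpow1 : ((-1 : ℝ)) ^ (2 * N) = 1 := by
          rw [pow_mul]; norm_num
        have hpow2 : ((-1 : ℝ)) ^ (2 * N + 1) = -1 := by
          rw [pow_succ, hpow1]; ring
        rw [hpow1, hpow2]
        push_cast
        ring
      rw [hsum, ih, e1, e2]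
      have h3 : (0:ℝ) < x + 2 * N + 1 := by positivity
      have h4 : (0:ℝ) < x + 2 * N + 2 := by positivity
      field_simp
      ring
  -- error term tends to zero
  have herr : Tendsto (fun N : ℕ => (1 / 2) * (g (x / 2 + 1 + N) - g ((x + 1) / 2 + N)))
      atTop (nhds 0) := by
    have hub : Tendsto (fun N : ℕ => (1 / 2) * (1 / ((x + 1) / 2 + N))) atTop (nhds 0) := by
      have h0 : Tendsto (fun N : ℕ => ((x + 1) / 2 + N : ℝ)) atTop atTop :=
        tendsto_atTop_add_const_left _ _ tendsto_natCast_atTop_atTop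
      have := (tendsto_inv_atTop_zero.comp h0).const_mul (1 / 2 : ℝ)
      simpa [one_div, Function.comp] using this
    refine tendsto_of_tendsto_of_tendsto_of_le_of_le tendsto_const_nhds hub ?_ ?_
    · intro N
      have h2 : (0:ℝ) < (x + 1) / 2 + N := by positivity
      have hle : g ((x + 1) / 2 + N) ≤ g (x / 2 + 1 + N) :=
        deriv_mono h2 (by push_cast; linarith)
      nlinarith
    · intro N
      have h2 : (0:ℝ) < (x + 1) / 2 + N := by positivity
      have hle : g (x / 2 + 1 + N) ≤ g ((x + 1) / 2 + N) + 1 / ((x + 1) / 2 + N) := by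
        rw [← deriv_rec h2]
        exact deriv_mono (by positivity) (by linarith)
      nlinarith
  have hT : Tendsto (fun N : ℕ => S (2 * N)) atTop (nhds L) := by
    simp only [key]
    simpa using tendsto_const_nhds.sub herr
  -- full sequence via squeeze
  have hhalf : Tendsto (fun N : ℕ => N / 2) atTop atTop :=
    tendsto_atTop_atTop.2 fun b => ⟨2 * b, fun a ha => by omega⟩
  have hlow : Tendsto (fun N : ℕ => S (2 * (N / 2))) atTop (nhds L) := hT.comp hhalf
  have hxN : Tendsto (fun N : ℕ => 1 / (x + N) : ℕ → ℝ) atTop (nhds 0) := by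
    have h0 : Tendsto (fun N : ℕ => (x + N : ℝ)) atTop atTop :=
      tendsto_atTop_add_const_left _ _ tendsto_natCast_atTop_atTop
    simpa [one_div, Function.comp_def] using tendsto_inv_atTop_zero.comp h0
  have hup : Tendsto (fun N : ℕ => S (2 * (N / 2)) + 1 / (x + N)) atTop (nhds L) := by
    simpa using hlow.add hxN
  have hterm : ∀ N k : ℕ, N = 2 * k + 1 → S N = S (2 * k) + 1 / (x + N) := by
    intro N k hk
    simp only [hS, hk, Finset.sum_range_succ]
    have hpow1 : ((-1 : ℝ)) ^ (2 * k) = 1 := by rw [pow_mul]; norm_num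
    rw [hpow1]
    push_cast
    ring
  refine tendsto_of_tendsto_of_tendsto_of_le_of_le hlow hup ?_ ?_
  · intro N
    show S (2 * (N / 2)) ≤ S N
    rcases Nat.even_or_odd N with ⟨k, hk⟩ | ⟨k, hk⟩
    · rw [show 2 * (N / 2) = N from by omega]
    · have hxn : (0:ℝ) < x + N := by positivity
      rw [show N / 2 = k from by omega, hterm N k (by omega)]
      linarith [one_div_pos.2 hxn]
  · intro N
    show S N ≤ S (2 * (N / 2)) + 1 / (x + N)
    rcases Nat.even_or_odd N with ⟨k, hk⟩ | ⟨k, hk⟩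
    · rw [show 2 * (N / 2) = N from by omega]
      have hxn : (0:ℝ) < x + N := by positivity
      linarith [one_div_pos.2 hxn]
    · rw [show N / 2 = k from by omega, hterm N k (by omega)]
end

section
/- Let α > 0 and t be real numbers with |t| < α. Then the series Σ_{k=2}^∞ (−1)^k · ζ(k, α) · t^(k−1) converges, where ζ(k, α) = Σ_{n=0}^∞ (n + α)^(−k) is the Hurwitz zeta value, and its sum equals ψ(α + t) − ψ(α), where ψ denotes the digamma function ψ(s) = Γ'(s)/Γ(s) of the real Gamma function Γ. -/
open Filter Set
open Topology

/-- The Hurwitz zeta value ζ(k, α) = Σ_{n=0}^∞ (n + α)^(−k) for an integer k and α > 0. -/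
noncomputable def hurwitzZetaValue (k : ℕ) (α : ℝ) : ℝ := ∑' n : ℕ, 1 / ((n : ℝ) + α) ^ k

lemma hasDerivAt_log_Gamma {x : ℝ} (hx : 0 < x) :
    HasDerivAt (fun y => Real.log (Real.Gamma y)) (digamma x) x := by
  have hΓ : DifferentiableAt ℝ Real.Gamma x := by
    apply Real.differentiableAt_Gamma
    intro m
    have h0 : -(m:ℝ) ≤ 0 := by simp [neg_nonpos]
    intro h; rw [h] at hx; linarith
  have hpos := Real.Gamma_pos_of_pos hx
  have h1 := (Real.hasDerivAt_log hpos.ne').comp x hΓ.hasDerivAt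
  simpa [digamma, div_eq_mul_inv, mul_comm, Function.comp_def] using h1

lemma digamma_shift_deriv {α : ℝ} (y : ℝ) (hy : 0 < α + y) :
    HasDerivAt (fun z => Real.log (Real.Gamma (α + z)) - Real.log (Real.Gamma α) - z * Real.log α)
      (digamma (α + y) - Real.log α) y := by
  have h1 : HasDerivAt (fun z : ℝ => α + z) 1 y := (hasDerivAt_id y).const_add α
  have h2 := (hasDerivAt_log_Gamma hy).comp y h1
  simpa [Pi.sub_def] using (h2.sub_const (Real.log (Real.Gamma α))).sub
    ((hasDerivAt_id y).mul_const (Real.log α))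

lemma base_summable : Summable (fun k : ℕ => 1/((k:ℝ)+1)^2) := by
  have h : Summable (fun n : ℕ => 1/(n:ℝ)^2) := Real.summable_one_div_nat_pow.mpr one_lt_two
  have := (summable_nat_add_iff (f := fun n : ℕ => 1/(n:ℝ)^2) 1).mpr h
  refine this.congr fun k => ?_
  push_cast; ring

lemma aux_summable {β : ℝ} (hβ : 0 < β) : Summable (fun k : ℕ => 1/(((k:ℝ)+β)^2)) := by
  set c := min β 1 with hc
  have hc0 : 0 < c := lt_min hβ one_pos
  refine Summable.of_nonneg_of_le (fun k => by positivity)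
    (fun k => ?_) ((base_summable.mul_left ((c⁻¹)^2)))
  have hk : c * ((k:ℝ)+1) ≤ (k:ℝ)+β := by
    rcases le_total β 1 with h | h
    · have : c = β := min_eq_left h
      rw [this]; nlinarith [Nat.cast_nonneg (α := ℝ) k]
    · have : c = 1 := min_eq_right h
      rw [this]; nlinarith [Nat.cast_nonneg (α := ℝ) k]
  have h1 : (0:ℝ) < (k:ℝ)+1 := by positivity
  have h2 : (0:ℝ) < (k:ℝ)+β := by positivity
  have hsq : (c * ((k:ℝ)+1))^2 ≤ ((k:ℝ)+β)^2 :=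
    pow_le_pow_left₀ (by positivity) hk 2
  have key : 1/((k:ℝ)+β)^2 ≤ 1/(c*((k:ℝ)+1))^2 :=
    one_div_le_one_div_of_le (by positivity) hsq
  calc 1/((k:ℝ)+β)^2 ≤ 1/(c*((k:ℝ)+1))^2 := key
    _ = (c⁻¹)^2 * (1/((k:ℝ)+1)^2) := by
        rw [mul_pow]; field_simp

noncomputable def gq (α : ℝ) (k : ℕ) (y : ℝ) : ℝ :=
  Real.log ((k:ℝ)+α) - Real.log ((k:ℝ)+α+y)
    + y * (Real.log ((k:ℝ)+α+1) - Real.log ((k:ℝ)+α))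

noncomputable def gq' (α : ℝ) (k : ℕ) (y : ℝ) : ℝ :=
  -((k:ℝ)+α+y)⁻¹ + (Real.log ((k:ℝ)+α+1) - Real.log ((k:ℝ)+α))

lemma gq_hasDerivAt (α : ℝ) (k : ℕ) (y : ℝ) (h : 0 < (k:ℝ)+α+y) :
    HasDerivAt (gq α k) (gq' α k y) y := by
  have h1 : HasDerivAt (fun z : ℝ => (k:ℝ)+α+z) 1 y := (hasDerivAt_id y).const_add _
  have h2 := (Real.hasDerivAt_log h.ne').comp y h1
  have h3 : HasDerivAt (fun z : ℝ => Real.log ((k:ℝ)+α) - Real.log ((k:ℝ)+α+z))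
      (-((k:ℝ)+α+y)⁻¹) y := by simpa using h2.const_sub (Real.log ((k:ℝ)+α))
  have h4 : HasDerivAt (fun z : ℝ => z * (Real.log ((k:ℝ)+α+1) - Real.log ((k:ℝ)+α)))
      (Real.log ((k:ℝ)+α+1) - Real.log ((k:ℝ)+α)) y := by
    simpa using (hasDerivAt_id y).mul_const _
  exact h3.add h4

lemma gq_bound (α r : ℝ) (hα : 0 < α) (hrα : r < α) (k : ℕ) (y : ℝ)
    (hy : y ∈ Ioo (-r) r) :
    ‖gq' α k y‖ ≤ 1/((k:ℝ)+α)^2 + (r+1) * (1/(((k:ℝ)+α-r)^2)) := by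
  obtain ⟨hy1, hy2⟩ := hy
  have hr : 0 < r := by linarith
  set K : ℝ := (k:ℝ)+α with hK
  have hK0 : 0 < K := by have := Nat.cast_nonneg (α := ℝ) k; simp [hK]; linarith
  have hKy : 0 < K + y := by linarith
  have hKr : 0 < K - r := by have := Nat.cast_nonneg (α := ℝ) k; simp [hK]; linarith
  have hK1 : (0:ℝ) < K + 1 := by linarith
  have hx1 : |(K+1)⁻¹| < 1 := by
    rw [abs_of_pos (by positivity)]
    rw [inv_lt_one_iff₀]; right; linarith
  have h1 := Real.abs_log_sub_add_sum_range_le hx1 1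
  simp only [Finset.sum_range_one, pow_one, Nat.cast_zero, zero_add, div_one] at h1
  have hlog1 : Real.log (1 - (K+1)⁻¹) = Real.log K - Real.log (K+1) := by
    have : 1 - (K+1)⁻¹ = K / (K+1) := by field_simp; ring
    rw [this, Real.log_div hK0.ne' hK1.ne']
  rw [hlog1] at h1
  have hrhs1 : |(K+1)⁻¹| ^ 2 / (1 - |(K+1)⁻¹|) ≤ 1/K^2 := by
    rw [abs_of_pos (show (0:ℝ) < (K+1)⁻¹ by positivity)]
    have h1K : 1 - (K+1)⁻¹ = K/(K+1) := by field_simp; ring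
    rw [h1K, div_div_eq_mul_div, div_le_div_iff₀ (by positivity) (by positivity)]
    have : ((K+1)⁻¹)^2 = ((K+1)^2)⁻¹ := by rw [inv_pow]
    rw [this]
    have e1 : ((K+1)^2)⁻¹ * (K+1) = (K+1)⁻¹ := by field_simp
    rw [e1]
    rw [inv_mul_le_iff₀ (by positivity)]
    nlinarith
  have part1 : |Real.log (K+1) - Real.log K - (K+1)⁻¹| ≤ 1/K^2 := by
    have he : Real.log (K+1) - Real.log K - (K+1)⁻¹
        = -((K+1)⁻¹ + (Real.log K - Real.log (K+1))) := by ring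
    rw [he, abs_neg]; exact le_trans h1 hrhs1
  have part2 : |(K+1)⁻¹ - (K+y)⁻¹| ≤ (r+1) * (1/(K-r)^2) := by
    have he : (K+1)⁻¹ - (K+y)⁻¹ = (y-1)/((K+1)*(K+y)) := by field_simp; ring
    rw [he, abs_div, abs_of_pos (by positivity : (0:ℝ) < (K+1)*(K+y))]
    rw [div_le_iff₀ (by positivity)]
    have hy1' : |y-1| ≤ r+1 := by
      rw [abs_le]; constructor <;> linarith
    have hden : (K-r)^2 ≤ (K+1)*(K+y) := by nlinarith
    calc |y-1| ≤ r+1 := hy1'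
      _ = (r+1) * (1/(K-r)^2) * (K-r)^2 := by field_simp
      _ ≤ (r+1) * (1/(K-r)^2) * ((K+1)*(K+y)) := by
          apply mul_le_mul_of_nonneg_left hden (by positivity)
  have split : gq' α k y = (Real.log (K+1) - Real.log K - (K+1)⁻¹) + ((K+1)⁻¹ - (K+y)⁻¹) := by
    simp only [gq', hK]; ring
  rw [Real.norm_eq_abs, split]
  calc |(Real.log (K+1) - Real.log K - (K+1)⁻¹) + ((K+1)⁻¹ - (K+y)⁻¹)|
      ≤ |Real.log (K+1) - Real.log K - (K+1)⁻¹| + |(K+1)⁻¹ - (K+y)⁻¹| := abs_add_le _ _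
    _ ≤ 1/K^2 + (r+1) * (1/(K-r)^2) := add_le_add part1 part2
    _ = 1/((k:ℝ)+α)^2 + (r+1) * (1/(((k:ℝ)+α-r)^2)) := by rw [hK]

lemma log_GammaSeq (s : ℝ) (hs : 0 < s) (n : ℕ) (hn : 1 ≤ n) :
    Real.log (Real.GammaSeq s n)
      = s * Real.log n + Real.log (n.factorial : ℝ)
        - ∑ j ∈ Finset.range (n+1), Real.log (s + j) := by
  have hn0 : (0:ℝ) < n := by exact_mod_cast hn
  have h1 : (0:ℝ) < (n:ℝ) ^ s := Real.rpow_pos_of_pos hn0 s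
  have h2 : (0:ℝ) < (n.factorial : ℝ) := by exact_mod_cast n.factorial_pos
  have h3 : ∀ j ∈ Finset.range (n+1), s + (j:ℝ) ≠ 0 := by
    intro j _
    have : (0:ℝ) ≤ j := Nat.cast_nonneg j
    positivity
  have h4 : (0:ℝ) < ∏ j ∈ Finset.range (n+1), (s + (j:ℝ)) := by
    apply Finset.prod_pos; intro j _
    have : (0:ℝ) ≤ j := Nat.cast_nonneg j
    positivity
  rw [Real.GammaSeq, Real.log_div (by positivity) h4.ne', Real.log_mul h1.ne' h2.ne',
    Real.log_rpow hn0, Real.log_prod h3]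

lemma gq_partial (α x : ℝ) (hα : 0 < α) (hx : 0 < α + x) (n : ℕ) (hn : 1 ≤ n) :
    ∑ k ∈ Finset.range (n+1), gq α k x
      = (Real.log (Real.GammaSeq (α+x) n) - Real.log (Real.GammaSeq α n))
        + x * (Real.log ((n:ℝ)+1+α) - Real.log n) - x * Real.log α := by
  have e1 : ∑ k ∈ Finset.range (n+1), gq α k x
      = (∑ k ∈ Finset.range (n+1), (Real.log ((k:ℝ)+α) - Real.log ((k:ℝ)+α+x)))
        + x * ∑ k ∈ Finset.range (n+1), (Real.log ((k:ℝ)+α+1) - Real.log ((k:ℝ)+α)) := by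
    rw [Finset.mul_sum, ← Finset.sum_add_distrib]
    apply Finset.sum_congr rfl
    intro k _
    simp only [gq]
  have e2 : ∑ k ∈ Finset.range (n+1), (Real.log ((k:ℝ)+α+1) - Real.log ((k:ℝ)+α))
      = Real.log ((n:ℝ)+1+α) - Real.log α := by
    calc ∑ k ∈ Finset.range (n+1), (Real.log ((k:ℝ)+α+1) - Real.log ((k:ℝ)+α))
        = ∑ k ∈ Finset.range (n+1),
            (Real.log (((k+1:ℕ):ℝ)+α) - Real.log ((k:ℝ)+α)) := by
          apply Finset.sum_congr rfl; intro k _; push_cast; ring_nf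
      _ = Real.log (((n+1:ℕ):ℝ)+α) - Real.log (((0:ℕ):ℝ)+α) :=
          Finset.sum_range_sub (f := fun k : ℕ => Real.log ((k:ℝ)+α)) (n+1)
      _ = Real.log ((n:ℝ)+1+α) - Real.log α := by push_cast; ring_nf
  have e3 : ∑ k ∈ Finset.range (n+1), (Real.log ((k:ℝ)+α) - Real.log ((k:ℝ)+α+x))
      = (Real.log (Real.GammaSeq (α+x) n) - Real.log (Real.GammaSeq α n)) - x * Real.log n := by
    have hA := log_GammaSeq α hα n hn
    have hB := log_GammaSeq (α+x) hx n hn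
    have cA : ∑ j ∈ Finset.range (n+1), Real.log (α + (j:ℝ))
        = ∑ k ∈ Finset.range (n+1), Real.log ((k:ℝ)+α) := by
      congr 1; ext k; rw [add_comm]
    have cB : ∑ j ∈ Finset.range (n+1), Real.log (α + x + (j:ℝ))
        = ∑ k ∈ Finset.range (n+1), Real.log ((k:ℝ)+α+x) := by
      congr 1; ext k; ring_nf
    rw [cA] at hA; rw [cB] at hB
    rw [Finset.sum_sub_distrib]
    have hA' : ∑ k ∈ Finset.range (n+1), Real.log ((k:ℝ)+α)
        = α * Real.log n + Real.log (n.factorial : ℝ) - Real.log (Real.GammaSeq α n) := by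
      linarith
    have hB' : ∑ k ∈ Finset.range (n+1), Real.log ((k:ℝ)+α+x)
        = (α+x) * Real.log n + Real.log (n.factorial : ℝ)
          - Real.log (Real.GammaSeq (α+x) n) := by linarith
    rw [hA', hB']; ring
  rw [e1, e2, e3]; ring

lemma gq_tsum (α x : ℝ) (hα : 0 < α) (hx : 0 < α + x)
    (hsum : Summable (fun k => gq α k x)) :
    ∑' k, gq α k x
      = Real.log (Real.Gamma (α+x)) - Real.log (Real.Gamma α) - x * Real.log α := by
  have hT : Tendsto (fun n : ℕ => ∑ k ∈ Finset.range (n+1), gq α k x) atTop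
      (𝓝 (∑' k, gq α k x)) :=
    hsum.hasSum.tendsto_sum_nat.comp (tendsto_add_atTop_nat 1)
  have T1 : Tendsto (fun n : ℕ => Real.log (Real.GammaSeq (α+x) n)) atTop
      (𝓝 (Real.log (Real.Gamma (α+x)))) :=
    ((Real.continuousAt_log (Real.Gamma_pos_of_pos hx).ne').tendsto).comp
      (Real.GammaSeq_tendsto_Gamma (α+x))
  have T2 : Tendsto (fun n : ℕ => Real.log (Real.GammaSeq α n)) atTop
      (𝓝 (Real.log (Real.Gamma α))) :=
    ((Real.continuousAt_log (Real.Gamma_pos_of_pos hα).ne').tendsto).comp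
      (Real.GammaSeq_tendsto_Gamma α)
  have T3 : Tendsto (fun n : ℕ => x * (Real.log ((n:ℝ)+1+α) - Real.log n)) atTop (𝓝 0) := by
    have t4 : Tendsto (fun n : ℕ => 1 + (1+α)/(n:ℝ)) atTop (𝓝 1) := by
      have := (tendsto_const_div_atTop_nhds_zero_nat (1+α)).const_add 1
      simpa using this
    have t5 : Tendsto (fun n : ℕ => Real.log (1 + (1+α)/(n:ℝ))) atTop (𝓝 0) := by
      have := ((Real.continuousAt_log one_ne_zero).tendsto).comp t4
      simpa [Function.comp_def] using this
    have heq : ∀ᶠ n : ℕ in atTop,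
        Real.log (1 + (1+α)/(n:ℝ)) = Real.log ((n:ℝ)+1+α) - Real.log n := by
      filter_upwards [eventually_ge_atTop 1] with n hn
      have hn0 : (0:ℝ) < n := by exact_mod_cast hn
      have : 1 + (1+α)/(n:ℝ) = ((n:ℝ)+1+α)/n := by field_simp; ring
      rw [this, Real.log_div (by positivity) hn0.ne']
    have := (t5.congr' heq).const_mul x
    simpa using this
  have hL : Tendsto (fun n : ℕ => ∑ k ∈ Finset.range (n+1), gq α k x) atTop
      (𝓝 (Real.log (Real.Gamma (α+x)) - Real.log (Real.Gamma α) - x * Real.log α)) := by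
    have hcomb := ((T1.sub T2).add T3).sub_const (x * Real.log α)
    rw [show Real.log (Real.Gamma (α+x)) - Real.log (Real.Gamma α) + 0 - x * Real.log α
        = Real.log (Real.Gamma (α+x)) - Real.log (Real.Gamma α) - x * Real.log α by ring] at hcomb
    apply hcomb.congr'
    filter_upwards [eventually_ge_atTop 1] with n hn
    exact (gq_partial α x hα hx n hn).symm
  exact tendsto_nhds_unique hT hL

set_option maxHeartbeats 1000000 in
theorem zeta_stmt_7 (α t : ℝ) (hα : 0 < α) (ht : |t| < α) :
    HasSum (fun k : ℕ => (-1 : ℝ) ^ (k + 2) * hurwitzZetaValue (k + 2) α * t ^ (k + 1))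
      (digamma (α + t) - digamma α) := by
  rcases eq_or_ne t 0 with rfl | ht0
  · have hfun : (fun k : ℕ => (-1:ℝ)^(k+2) * hurwitzZetaValue (k+2) α * (0:ℝ)^(k+1))
        = fun _ => (0:ℝ) := by
      funext k; simp
    rw [hfun, add_zero, sub_self]
    exact hasSum_zero
  -- setup
  have habs := abs_nonneg t
  set r : ℝ := (|t| + α) / 2 with hrdef
  have hr0 : 0 < r := by positivity
  have htr : |t| < r := by simp only [hrdef]; linarith
  have hrα : r < α := by simp only [hrdef]; linarith
  have ht' := abs_lt.mp htr
  have ht_mem : t ∈ Ioo (-r) r := ⟨ht'.1, ht'.2⟩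
  have h0_mem : (0:ℝ) ∈ Ioo (-r) r := ⟨by linarith, hr0⟩
  set u : ℕ → ℝ := fun k => 1/((k:ℝ)+α)^2 + (r+1) * (1/(((k:ℝ)+α-r)^2)) with hu_def
  have hu : Summable u := by
    apply Summable.add (aux_summable hα)
    exact (((aux_summable (show 0 < α - r by linarith)).congr
      (fun k => by ring_nf)).mul_left (r+1))
  have hpos : ∀ (k : ℕ) (y : ℝ), y ∈ Ioo (-r) r → 0 < (k:ℝ)+α+y := by
    intro k y hy
    have := Nat.cast_nonneg (α := ℝ) k
    have := hy.1
    linarith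
  have hg : ∀ (k : ℕ) (y : ℝ), y ∈ Ioo (-r) r → HasDerivAt (gq α k) (gq' α k y) y :=
    fun k y hy => gq_hasDerivAt α k y (hpos k y hy)
  have hg' : ∀ (k : ℕ) (y : ℝ), y ∈ Ioo (-r) r → ‖gq' α k y‖ ≤ u k :=
    fun k y hy => gq_bound α r hα hrα k y hy
  have hg0 : Summable (fun k => gq α k 0) := by
    apply summable_zero.congr
    intro k; simp [gq]
  have hOpen : IsOpen (Ioo (-r) r) := isOpen_Ioo
  have hPre : IsPreconnected (Ioo (-r) r) := isPreconnected_Ioo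
  have hderiv_tsum : ∀ y ∈ Ioo (-r) r,
      HasDerivAt (fun z => ∑' k, gq α k z) (∑' k, gq' α k y) y :=
    fun y hy => hasDerivAt_tsum_of_isPreconnected hu hOpen hPre hg hg' h0_mem hg0 hy
  have hsummable : ∀ x ∈ Ioo (-r) r, Summable (fun k => gq α k x) :=
    fun x hx => summable_of_summable_hasDerivAt_of_isPreconnected hu hOpen hPre hg hg'
      h0_mem hg0 hx
  have key : ∀ y ∈ Ioo (-r) r, ∑' k, gq' α k y = digamma (α+y) - Real.log α := by
    intro y hy
    have hαy : 0 < α + y := by have := hy.1; linarith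
    have heq : (fun z => Real.log (Real.Gamma (α + z)) - Real.log (Real.Gamma α)
        - z * Real.log α) =ᶠ[𝓝 y] (fun z => ∑' k, gq α k z) := by
      filter_upwards [hOpen.mem_nhds hy] with z hz
      exact (gq_tsum α z hα (by have := hz.1; linarith) (hsummable z hz)).symm
    exact ((hderiv_tsum y hy).congr_of_eventuallyEq heq).unique (digamma_shift_deriv y hαy)
  have hSt : Summable (fun k => gq' α k t) :=
    Summable.of_norm_bounded hu (fun k => hg' k t ht_mem)
  have hS0 : Summable (fun k => gq' α k 0) :=
    Summable.of_norm_bounded hu (fun k => hg' k 0 h0_mem)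
  have hdiff : HasSum (fun k : ℕ => ((k:ℝ)+α)⁻¹ - ((k:ℝ)+α+t)⁻¹)
      (digamma (α+t) - digamma α) := by
    have h := hSt.hasSum.sub hS0.hasSum
    have hterm : (fun k : ℕ => gq' α k t - gq' α k 0)
        = fun k : ℕ => ((k:ℝ)+α)⁻¹ - ((k:ℝ)+α+t)⁻¹ := by
      funext k; simp only [gq']; ring_nf
    rw [hterm, key t ht_mem, key 0 h0_mem] at h
    simpa using h
  -- double series
  set F : ℕ × ℕ → ℝ := fun p => (-1:ℝ)^(p.1+2) * t^(p.1+1) / ((p.2:ℝ)+α)^(p.1+2) with hF_def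
  have hFsummable : Summable F := by
    have hA : Summable (fun m : ℕ => (|t|/α)^m) :=
      summable_geometric_of_lt_one (by positivity) ((div_lt_one hα).mpr ht)
    have hB : Summable (fun k : ℕ => |t| * (1/(((k:ℝ)+α)^2))) := (aux_summable hα).mul_left _
    have hA' : Summable (fun m : ℕ => ‖(|t|/α)^m‖) := by
      refine hA.congr fun m => ?_
      rw [Real.norm_eq_abs]
      exact (abs_of_nonneg (show (0:ℝ) ≤ (|t|/α)^m by positivity)).symm
    have hB' : Summable (fun k : ℕ => ‖|t| * (1/(((k:ℝ)+α)^2))‖) := by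
      refine hB.congr fun k => ?_
      rw [Real.norm_eq_abs]
      exact (abs_of_nonneg (show (0:ℝ) ≤ |t| * (1/(((k:ℝ)+α)^2)) by positivity)).symm
    have hprod : Summable (fun p : ℕ × ℕ => (|t|/α)^p.1 * (|t| * (1/(((p.2:ℝ)+α)^2)))) :=
      summable_mul_of_summable_norm hA' hB'
    refine Summable.of_norm_bounded hprod (fun p => ?_)
    obtain ⟨m, k⟩ := p
    have hkα : (0:ℝ) < (k:ℝ)+α := by have := Nat.cast_nonneg (α := ℝ) k; linarith
    have hnorm : ‖F (m, k)‖ = |t|^(m+1) / ((k:ℝ)+α)^(m+2) := by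
      simp only [hF_def, Real.norm_eq_abs]
      rw [abs_div, abs_mul, abs_pow, abs_pow, abs_neg, abs_one, one_pow, one_mul,
        abs_of_pos (by positivity : (0:ℝ) < ((k:ℝ)+α)^(m+2))]
    rw [hnorm]
    have hle : α^m ≤ ((k:ℝ)+α)^m := pow_le_pow_left₀ hα.le (by linarith) m
    calc |t|^(m+1) / ((k:ℝ)+α)^(m+2)
        = |t|^(m+1) / (((k:ℝ)+α)^m * ((k:ℝ)+α)^2) := by rw [← pow_add]
      _ ≤ |t|^(m+1) / (α^m * ((k:ℝ)+α)^2) := by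
          apply div_le_div_of_nonneg_left (by positivity) (by positivity)
          apply mul_le_mul_of_nonneg_right hle (by positivity)
      _ = (|t|/α)^m * (|t| * (1/(((k:ℝ)+α)^2))) := by
          rw [div_pow]; field_simp; ring
  have hfiber_k : ∀ k : ℕ, HasSum (fun m => F (m, k))
      (((k:ℝ)+α)⁻¹ - (((k:ℝ)+α+t))⁻¹) := by
    intro k
    set K : ℝ := (k:ℝ)+α with hKdef
    have hK : 0 < K := by have h := Nat.cast_nonneg (α := ℝ) k; rw [hKdef]; linarith
    have hαK : α ≤ K := by have h := Nat.cast_nonneg (α := ℝ) k; rw [hKdef]; linarith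
    have hKt : 0 < K + t := by have := abs_lt.mp ht; linarith
    have habs1 : |(-t)/K| < 1 := by
      rw [abs_div, abs_neg, abs_of_pos hK, div_lt_one hK]
      linarith
    have hgeo := (hasSum_geometric_of_abs_lt_one habs1).mul_left (t/K^2)
    have hfun : (fun m : ℕ => t/K^2 * ((-t)/K)^m) = fun m => F (m, k) := by
      funext m
      simp only [hF_def]
      rw [div_pow, neg_pow]
      rw [show (K:ℝ)^(m+2) = K^m * K^2 by rw [← pow_add]]
      field_simp
      ring
    have hval : t/K^2 * (1 - (-t)/K)⁻¹ = K⁻¹ - (K+t)⁻¹ := by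
      have h1 : 1 - (-t)/K = (K+t)/K := by field_simp; ring
      rw [h1]
      field_simp
      ring
    rw [hfun, hval] at hgeo
    exact hgeo
  have hzeta_sum : ∀ m : ℕ, HasSum (fun k : ℕ => 1/(((k:ℝ)+α))^(m+2))
      (hurwitzZetaValue (m+2) α) := by
    intro m
    have hsum : Summable (fun k : ℕ => 1/(((k:ℝ)+α))^(m+2)) := by
      refine Summable.of_nonneg_of_le (fun k => by positivity) (fun k => ?_)
        ((aux_summable hα).mul_left ((α^m)⁻¹))
      have hkα : (0:ℝ) < (k:ℝ)+α := by have := Nat.cast_nonneg (α := ℝ) k; linarith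
      have hle : α^m ≤ ((k:ℝ)+α)^m := pow_le_pow_left₀ hα.le (by linarith) m
      calc 1/((k:ℝ)+α)^(m+2) = 1/(((k:ℝ)+α)^m * ((k:ℝ)+α)^2) := by rw [← pow_add]
        _ ≤ 1/(α^m * ((k:ℝ)+α)^2) := by
            apply div_le_div_of_nonneg_left (by positivity) (by positivity)
            apply mul_le_mul_of_nonneg_right hle (by positivity)
        _ = (α^m)⁻¹ * (1/(((k:ℝ)+α)^2)) := by field_simp
    exact hsum.hasSum
  have hfiber_m : ∀ m : ℕ, HasSum (fun k => F (m, k))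
      ((-1:ℝ)^(m+2) * hurwitzZetaValue (m+2) α * t^(m+1)) := by
    intro m
    have h := (hzeta_sum m).mul_left ((-1:ℝ)^(m+2) * t^(m+1))
    have hfun : (fun k : ℕ => (-1:ℝ)^(m+2) * t^(m+1) * (1/(((k:ℝ)+α))^(m+2)))
        = fun k => F (m, k) := by
      funext k
      simp only [hF_def]
      rw [mul_one_div]
    have hval : (-1:ℝ)^(m+2) * t^(m+1) * hurwitzZetaValue (m+2) α
        = (-1:ℝ)^(m+2) * hurwitzZetaValue (m+2) α * t^(m+1) := by ring
    rw [hfun, hval] at h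
    exact h
  -- swap
  have hFS : HasSum F (∑' p, F p) := hFsummable.hasSum
  have hGS : HasSum (F ∘ (Equiv.prodComm ℕ ℕ)) (∑' p, F p) :=
    (Equiv.hasSum_iff (Equiv.prodComm ℕ ℕ)).mpr hFS
  have h1 : HasSum (fun k : ℕ => ((k:ℝ)+α)⁻¹ - ((k:ℝ)+α+t)⁻¹) (∑' p, F p) := by
    apply hGS.prod_fiberwise
    intro k
    exact hfiber_k k
  have hSval : (∑' p, F p) = digamma (α+t) - digamma α := h1.unique hdiff
  have h2 : HasSum (fun m : ℕ => (-1:ℝ)^(m+2) * hurwitzZetaValue (m+2) α * t^(m+1))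
      (∑' p, F p) := hFS.prod_fiberwise hfiber_m
  rw [hSval] at h2
  exact h2
end

section
/- Let x > 0 be a real number. Then ψ(x/2 + 1) − ψ((x+1)/2) = 2 · Σ_{k=2}^∞ Σ_{n=0}^∞ (−1/(2n + x + 1))^k, where the double series converges absolutely and ψ denotes the digamma function ψ(t) = Γ'(t)/Γ(t) of the real Gamma function Γ. -/
open Filter Set

lemma gamma_diff {t : ℝ} (ht : 0 < t) : DifferentiableAt ℝ Real.Gamma t :=
  Real.differentiableAt_Gamma fun m =>
    (lt_of_le_of_lt (neg_nonpos.mpr (Nat.cast_nonneg m)) ht).ne'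

lemma hasDerivAt_logGamma {t : ℝ} (ht : 0 < t) :
    HasDerivAt (fun s => Real.log (Real.Gamma s)) (digamma t) t :=
  (gamma_diff ht).hasDerivAt.log (Real.Gamma_pos_of_pos ht).ne'

lemma digamma_mono {s t : ℝ} (hs : 0 < s) (hst : s ≤ t) : digamma s ≤ digamma t := by
  have ht : 0 < t := hs.trans_le hst
  have hdiff : ∀ x ∈ Ioi (0:ℝ), DifferentiableAt ℝ (Real.log ∘ Real.Gamma) x := fun x hx =>
    (gamma_diff hx).log (Real.Gamma_pos_of_pos hx).ne'
  have := Real.convexOn_log_Gamma.monotoneOn_deriv hdiff (mem_Ioi.mpr hs) (mem_Ioi.mpr ht) hst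
  rwa [show deriv (Real.log ∘ Real.Gamma) s = digamma s from (hasDerivAt_logGamma hs).deriv,
    show deriv (Real.log ∘ Real.Gamma) t = digamma t from (hasDerivAt_logGamma ht).deriv] at this

lemma digamma_add_one {t : ℝ} (ht : 0 < t) : digamma (t + 1) = digamma t + 1 / t := by
  have h1 : HasDerivAt (fun s => Real.Gamma (s + 1)) (deriv Real.Gamma (t + 1)) t := by
    simpa [Function.comp_def] using ((gamma_diff (by linarith : (0:ℝ) < t + 1)).hasDerivAt.comp t
      ((hasDerivAt_id t).add_const 1))
  have h2 : HasDerivAt (fun s => s * Real.Gamma s)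
      (1 * Real.Gamma t + t * deriv Real.Gamma t) t :=
    (hasDerivAt_id t).mul (gamma_diff ht).hasDerivAt
  have heq : (fun s => Real.Gamma (s + 1)) =ᶠ[nhds t] fun s => s * Real.Gamma s := by
    filter_upwards [eventually_gt_nhds ht] with s hs using Real.Gamma_add_one hs.ne'
  have h1' : HasDerivAt (fun s => Real.Gamma (s + 1))
      (1 * Real.Gamma t + t * deriv Real.Gamma t) t := h2.congr_of_eventuallyEq heq
  have hder : deriv Real.Gamma (t + 1) = Real.Gamma t + t * deriv Real.Gamma t := by
    have := h1.unique h1'; linarith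
  have hΓ : Real.Gamma t ≠ 0 := (Real.Gamma_pos_of_pos ht).ne'
  rw [digamma, digamma, hder, Real.Gamma_add_one ht.ne']
  field_simp
  ring

lemma hasSum_tele (g : ℕ → ℝ) (h0 : ∀ n, 0 ≤ g n) (hd : ∀ n, g (n + 1) ≤ g n)
    (hlim : Tendsto g atTop (nhds 0)) :
    HasSum (fun n => g n - g (n + 1)) (g 0) := by
  have hnn : ∀ n, 0 ≤ g n - g (n + 1) := fun n => sub_nonneg.mpr (hd n)
  rw [hasSum_iff_tendsto_nat_of_nonneg hnn]
  simp only [Finset.sum_range_sub' g]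
  simpa using tendsto_const_nhds.sub hlim

lemma summable_of_le_tele {f g : ℕ → ℝ} (h0 : ∀ n, 0 ≤ f n) (hg0 : ∀ n, 0 ≤ g n)
    (hle : ∀ n, f n ≤ g n - g (n + 1)) : Summable f := by
  refine summable_of_sum_range_le (c := g 0) h0 (fun n => ?_)
  calc ∑ i ∈ Finset.range n, f i ≤ ∑ i ∈ Finset.range n, (g i - g (i + 1)) :=
        Finset.sum_le_sum fun i _ => hle i
    _ = g 0 - g n := Finset.sum_range_sub' g n
    _ ≤ g 0 := by linarith [hg0 n]

/-- The auxiliary series `P a = ∑_{n≥0} (1/(n+a) - 1/(n+a+1/2))`. -/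
noncomputable def P (a : ℝ) : ℝ := ∑' n : ℕ, (1 / ((n : ℝ) + a) - 1 / ((n : ℝ) + a + 1/2))

lemma tendsto_inv_add {a : ℝ} :
    Tendsto (fun n : ℕ => 1 / ((n : ℝ) + a)) atTop (nhds 0) := by
  have h : Tendsto (fun n : ℕ => (n : ℝ) + a) atTop atTop :=
    tendsto_atTop_add_const_right _ a tendsto_natCast_atTop_atTop
  simpa [one_div, Pi.inv_def] using h.inv_tendsto_atTop

lemma P_term_nonneg {a : ℝ} (ha : 0 < a) (n : ℕ) :
    0 ≤ 1 / ((n : ℝ) + a) - 1 / ((n : ℝ) + a + 1/2) := by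
  have h1 : (0:ℝ) < (n : ℝ) + a := by positivity
  have := one_div_le_one_div_of_le h1 (by linarith : (n : ℝ) + a ≤ (n : ℝ) + a + 1/2)
  linarith

lemma P_term_le {a : ℝ} (ha : 0 < a) (n : ℕ) :
    1 / ((n : ℝ) + a) - 1 / ((n : ℝ) + a + 1/2) ≤
      1 / ((n : ℝ) + a) - 1 / (((n + 1 : ℕ) : ℝ) + a) := by
  have h1 : (0:ℝ) < (n : ℝ) + a + 1/2 := by positivity
  have h2 := one_div_le_one_div_of_le h1 (by push_cast; linarith : (n : ℝ) + a + 1/2 ≤ ((n + 1 : ℕ) : ℝ) + a)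
  linarith

lemma P_hasSum_tele {a : ℝ} (ha : 0 < a) :
    HasSum (fun n : ℕ => 1 / ((n : ℝ) + a) - 1 / (((n + 1 : ℕ) : ℝ) + a)) (1 / a) := by
  have := hasSum_tele (fun n : ℕ => 1 / ((n : ℝ) + a))
    (fun n => by positivity)
    (fun n => one_div_le_one_div_of_le (by positivity) (by push_cast; linarith))
    tendsto_inv_add
  simpa using this

lemma P_summable {a : ℝ} (ha : 0 < a) :
    Summable (fun n : ℕ => 1 / ((n : ℝ) + a) - 1 / ((n : ℝ) + a + 1/2)) :=
  summable_of_le_tele (P_term_nonneg ha) (fun n => by positivity) (P_term_le ha)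

lemma P_nonneg {a : ℝ} (ha : 0 < a) : 0 ≤ P a :=
  tsum_nonneg (P_term_nonneg ha)

lemma P_le {a : ℝ} (ha : 0 < a) : P a ≤ 1 / a := by
  have h := Summable.tsum_le_tsum (P_term_le ha) (P_summable ha) (P_hasSum_tele ha).summable
  rwa [(P_hasSum_tele ha).tsum_eq] at h

lemma P_shift {a : ℝ} (ha : 0 < a) : P (a + 1) = P a - (1 / a - 1 / (a + 1/2)) := by
  have h := Summable.tsum_eq_zero_add (P_summable ha)
  have h2 : (∑' n : ℕ, (1 / (((n + 1 : ℕ) : ℝ) + a) - 1 / (((n + 1 : ℕ) : ℝ) + a + 1/2)))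
      = P (a + 1) := by
    refine tsum_congr fun n => ?_
    push_cast
    ring_nf
  have hPa : P a = ∑' n : ℕ, (1 / ((n : ℝ) + a) - 1 / ((n : ℝ) + a + 1/2)) := rfl
  rw [h2] at h
  rw [hPa, h]
  push_cast
  ring

lemma P_bounds {a : ℝ} (ha : 0 < a) : 0 ≤ P a ∧ P a ≤ 1 / a := ⟨P_nonneg ha, P_le ha⟩

/-- The key identity: the digamma difference equals the telescoping series. -/
lemma key (x : ℝ) (hx : 0 < x) :
    digamma (x / 2 + 1) - digamma ((x + 1) / 2) = P ((x + 1) / 2) := by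
  set D : ℝ → ℝ := fun y => digamma (y / 2 + 1) - digamma ((y + 1) / 2) - P ((y + 1) / 2) with hD
  have step : ∀ y : ℝ, 0 < y → D (y + 2) = D y := by
    intro y hy
    have h1 : (y + 2) / 2 + 1 = (y / 2 + 1) + 1 := by ring
    have h2 : (y + 2 + 1) / 2 = (y + 1) / 2 + 1 := by ring
    have ha : (0:ℝ) < (y + 1) / 2 := by linarith
    have hb : (0:ℝ) < y / 2 + 1 := by linarith
    have e1 := digamma_add_one hb
    have e2 := digamma_add_one ha
    have e3 := P_shift ha
    have e4 : (y + 1) / 2 + 1/2 = (y + 2) / 2 := by ring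
    simp only [hD, h1, h2, e1, e2, e3]
    have hy1 : (0:ℝ) < y + 1 := by linarith
    have hy2 : (0:ℝ) < y + 2 := by linarith
    have c1 : 1 / (y / 2 + 1) = 2 / (y + 2) := by
      rw [div_eq_div_iff hb.ne' hy2.ne']; ring
    have c2 : 1 / ((y + 1) / 2) = 2 / (y + 1) := by
      rw [div_eq_div_iff ha.ne' hy1.ne']; ring
    have c3 : 1 / ((y + 1) / 2 + 1/2) = 2 / (y + 2) := by
      rw [e4, div_eq_div_iff (by linarith : (0:ℝ) < (y+2)/2).ne' hy2.ne']; ring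
    rw [c1, c2, c3]
    ring
  have stepk : ∀ k : ℕ, D (x + 2 * k) = D x := by
    intro k
    induction k with
    | zero => norm_num
    | succ n ih =>
      have : x + 2 * ((n : ℝ) + 1) = (x + 2 * n) + 2 := by ring
      push_cast
      rw [this, step _ (by positivity), ih]
  have bound : ∀ y : ℝ, 0 < y → |D y| ≤ 4 / (y + 1) := by
    intro y hy
    have ha : (0:ℝ) < (y + 1) / 2 := by linarith
    have hy1 : (0:ℝ) < y + 1 := by linarith
    have hf0 : digamma ((y + 1) / 2) ≤ digamma (y / 2 + 1) :=
      digamma_mono ha (by linarith)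
    have hf1 : digamma (y / 2 + 1) ≤ digamma ((y + 1) / 2) + 2 / (y + 1) := by
      have h := digamma_mono (by linarith : (0:ℝ) < y / 2 + 1)
        (by linarith : y / 2 + 1 ≤ (y + 1) / 2 + 1)
      rw [digamma_add_one ha] at h
      have c2 : 1 / ((y + 1) / 2) = 2 / (y + 1) := by
        rw [div_eq_div_iff ha.ne' hy1.ne']; ring
      linarith [c2 ▸ h]
    have hP := P_bounds ha
    have c2 : 1 / ((y + 1) / 2) = 2 / (y + 1) := by
      rw [div_eq_div_iff ha.ne' hy1.ne']; ring
    rw [c2] at hP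
    have h42 : 4 / (y + 1) = 2 * (2 / (y + 1)) := by ring
    have hpos : (0:ℝ) ≤ 2 / (y + 1) := by positivity
    rw [abs_le]
    constructor <;> simp only [hD] <;> nlinarith [hP.1, hP.2]
  have hlim : Tendsto (fun k : ℕ => 4 / (x + 2 * (k : ℝ) + 1)) atTop (nhds 0) := by
    have h : Tendsto (fun k : ℕ => x + 2 * (k : ℝ) + 1) atTop atTop := by
      apply tendsto_atTop_add_const_right
      apply tendsto_atTop_add_const_left
      exact tendsto_natCast_atTop_atTop.const_mul_atTop (by norm_num)
    have := h.inv_tendsto_atTop.const_mul (4:ℝ)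
    simpa [div_eq_mul_inv] using this
  have habs : |D x| ≤ 0 := by
    refine ge_of_tendsto' hlim fun k => ?_
    calc |D x| = |D (x + 2 * k)| := by rw [stepk k]
      _ ≤ 4 / (x + 2 * k + 1) := bound _ (by positivity)
  have : D x = 0 := abs_eq_zero.mp (le_antisymm habs (abs_nonneg _))
  simp only [hD] at this
  linarith

theorem zeta_stmt_8 (x : ℝ) (hx : 0 < x) :
    Summable (fun p : ℕ × ℕ => |(-1 / (2 * (p.2 : ℝ) + x + 1)) ^ (p.1 + 2)|) ∧
    digamma (x / 2 + 1) - digamma ((x + 1) / 2) =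
      2 * ∑' k : ℕ, ∑' n : ℕ, (-1 / (2 * (n : ℝ) + x + 1)) ^ (k + 2) := by
  have hA : ∀ n : ℕ, (0:ℝ) < 2 * (n : ℝ) + x + 1 := fun n => by positivity
  have hA1 : ∀ n : ℕ, (1:ℝ) < 2 * (n : ℝ) + x + 1 := fun n => by
    have : (0:ℝ) ≤ (n : ℝ) := Nat.cast_nonneg n
    linarith
  -- absolute values
  have habsval : ∀ (k n : ℕ),
      |(-1 / (2 * (n : ℝ) + x + 1)) ^ (k + 2)| = (1 / (2 * (n : ℝ) + x + 1)) ^ (k + 2) := by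
    intro k n
    rw [abs_pow, abs_div, abs_neg, abs_one, abs_of_pos (hA n)]
  -- summability of the squares
  have hq : Summable (fun n : ℕ => (1 / (2 * (n : ℝ) + x + 1)) ^ 2) := by
    refine summable_of_le_tele (fun n => by positivity)
      (g := fun n : ℕ => 1 / (2 * (n : ℝ) + x)) (fun n => by positivity) (fun n => ?_)
    have hb : (0:ℝ) < 2 * (n : ℝ) + x := by positivity
    have hb2 : (0:ℝ) < 2 * (((n : ℝ)) + 1) + x := by positivity
    push_cast
    rw [div_sub_div _ _ hb.ne' hb2.ne', div_pow, div_le_div_iff₀ (by positivity) (by positivity)]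
    nlinarith [sq_nonneg (2 * (n:ℝ) + x), hb.le]
  -- each row summable (absolute values)
  have hrow : ∀ k : ℕ, Summable (fun n : ℕ => (1 / (2 * (n : ℝ) + x + 1)) ^ (k + 2)) := by
    intro k
    refine Summable.of_nonneg_of_le (fun n => by positivity) (fun n => ?_) hq
    have h1 : (1:ℝ) / (2 * (n : ℝ) + x + 1) ≤ 1 := by
      rw [div_le_one (hA n)]; exact (hA1 n).le
    calc (1 / (2 * (n : ℝ) + x + 1)) ^ (k + 2)
        ≤ (1 / (2 * (n : ℝ) + x + 1)) ^ 2 :=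
          pow_le_pow_of_le_one (by positivity) h1 (by omega)
      _ = (1 / (2 * (n : ℝ) + x + 1)) ^ 2 := rfl
  -- row sums dominated by a geometric series
  set r : ℝ := 1 / (x + 1) with hr
  have hr0 : 0 ≤ r := by positivity
  have hr1 : r < 1 := by
    rw [hr, div_lt_one (by linarith)]; linarith
  have hrow_le : ∀ k : ℕ,
      (∑' n : ℕ, (1 / (2 * (n : ℝ) + x + 1)) ^ (k + 2)) ≤
        r ^ k * ∑' n : ℕ, (1 / (2 * (n : ℝ) + x + 1)) ^ 2 := by
    intro k
    rw [← tsum_mul_left]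
    refine Summable.tsum_le_tsum (fun n => ?_) (hrow k) (hq.mul_left _)
    have h1 : (1:ℝ) / (2 * (n : ℝ) + x + 1) ≤ r := by
      rw [hr]
      apply one_div_le_one_div_of_le (by linarith)
      have : (0:ℝ) ≤ (n : ℝ) := Nat.cast_nonneg n
      linarith
    calc (1 / (2 * (n : ℝ) + x + 1)) ^ (k + 2)
        = (1 / (2 * (n : ℝ) + x + 1)) ^ k * (1 / (2 * (n : ℝ) + x + 1)) ^ 2 := by
          rw [← pow_add]
      _ ≤ r ^ k * (1 / (2 * (n : ℝ) + x + 1)) ^ 2 := by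
          apply mul_le_mul_of_nonneg_right _ (by positivity)
          exact pow_le_pow_left₀ (by positivity) h1 k
  -- summability over the product
  have habs : Summable (fun p : ℕ × ℕ => |(-1 / (2 * (p.2 : ℝ) + x + 1)) ^ (p.1 + 2)|) := by
    have : Summable (fun p : ℕ × ℕ => (1 / (2 * (p.2 : ℝ) + x + 1)) ^ (p.1 + 2)) := by
      refine (summable_prod_of_nonneg (fun p => by positivity)).mpr ⟨fun k => hrow k, ?_⟩
      refine Summable.of_nonneg_of_le (fun k => tsum_nonneg fun n => by positivity)
        (fun k => hrow_le k) ?_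
      exact (summable_geometric_of_lt_one hr0 hr1).mul_right _
    exact this.congr fun p => (habsval p.1 p.2).symm
  refine ⟨habs, ?_⟩
  -- summability of the signed terms on the product
  have hu : Summable (fun p : ℕ × ℕ => (-1 / (2 * (p.2 : ℝ) + x + 1)) ^ (p.1 + 2)) := by
    refine Summable.of_abs ?_
    exact habs
  -- swap the order of summation
  have hcomm : (∑' k : ℕ, ∑' n : ℕ, (-1 / (2 * (n : ℝ) + x + 1)) ^ (k + 2)) =
      ∑' n : ℕ, ∑' k : ℕ, (-1 / (2 * (n : ℝ) + x + 1)) ^ (k + 2) := by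
    refine (Summable.tsum_comm' (f := fun (k n : ℕ) => (-1 / (2 * (n : ℝ) + x + 1)) ^ (k + 2)) (by exact hu) ?_ ?_).symm
    · intro k
      exact Summable.of_abs (((hrow k).congr fun n => (habsval k n).symm))
    · intro n
      have hlt : |(-1 : ℝ) / (2 * (n : ℝ) + x + 1)| < 1 := by
        rw [abs_div, abs_neg, abs_one, abs_of_pos (hA n), div_lt_one (hA n)]
        exact hA1 n
      have := (summable_geometric_of_abs_lt_one hlt).mul_right
        ((-1 / (2 * (n : ℝ) + x + 1)) ^ 2)
      exact this.congr fun k => by rw [← pow_add]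
  -- evaluate inner geometric sums
  have hinner : ∀ n : ℕ, (∑' k : ℕ, (-1 / (2 * (n : ℝ) + x + 1)) ^ (k + 2)) =
      (1 / ((n : ℝ) + (x + 1) / 2) - 1 / ((n : ℝ) + (x + 1) / 2 + 1/2)) / 2 := by
    intro n
    set A : ℝ := 2 * (n : ℝ) + x + 1 with hAdef
    have hApos : 0 < A := hA n
    have hlt : |(-1 : ℝ) / A| < 1 := by
      rw [abs_div, abs_neg, abs_one, abs_of_pos hApos, div_lt_one hApos]
      exact hA1 n
    have h1 : (∑' k : ℕ, (-1 / A) ^ (k + 2)) = (∑' k : ℕ, (-1 / A) ^ k) * (-1 / A) ^ 2 := by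
      rw [← tsum_mul_right]
      exact tsum_congr fun k => by rw [← pow_add]
    rw [h1, tsum_geometric_of_abs_lt_one hlt]
    have hA1' : (0:ℝ) < A + 1 := by linarith
    have hd1 : (0:ℝ) < (n : ℝ) + (x + 1) / 2 := by positivity
    have hd2 : (0:ℝ) < (n : ℝ) + (x + 1) / 2 + 1/2 := by positivity
    have hsub : (1:ℝ) - (-1 / A) = (A + 1) / A := by field_simp; ring
    rw [hsub]
    rw [hAdef] at hA1' ⊢
    field_simp
    ring
  rw [key x hx, hcomm]
  have : (∑' n : ℕ, ∑' k : ℕ, (-1 / (2 * (n : ℝ) + x + 1)) ^ (k + 2)) =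
      ∑' n : ℕ, (1 / ((n : ℝ) + (x + 1) / 2) - 1 / ((n : ℝ) + (x + 1) / 2 + 1/2)) / 2 :=
    tsum_congr hinner
  rw [this, P]
  rw [← tsum_mul_left]
  exact tsum_congr fun n => by ring
end

section
/- Define t(s) = Σ_{p prime} 1/(p^s − 1) for real s > 1. Then lim_{s→∞} 2^s · t(s) = 1, i.e., the function s ↦ 2^s · t(s) tends to 1 as the real variable s tends to +∞. -/
open Filter Set

/-- The prime sum t(s) = Σ_{p prime} 1/(p^s − 1). -/
noncomputable def primeSum (s : ℝ) : ℝ := ∑' p : Nat.Primes, 1 / (((p : ℕ) : ℝ) ^ s - 1)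

namespace ZetaAux10

lemma two_le_cast (p : Nat.Primes) : (2 : ℝ) ≤ ((p : ℕ) : ℝ) := by
  exact_mod_cast p.2.two_le

lemma rpow_two_le {s : ℝ} (hs : 2 ≤ s) (p : Nat.Primes) :
    (4 : ℝ) ≤ ((p : ℕ) : ℝ) ^ s := by
  have h1 : (2 : ℝ) ^ s ≤ ((p : ℕ) : ℝ) ^ s :=
    Real.rpow_le_rpow (by norm_num) (two_le_cast p) (by linarith)
  have h2 : (2 : ℝ) ^ (2 : ℝ) ≤ (2 : ℝ) ^ s :=
    Real.rpow_le_rpow_of_exponent_le one_le_two hs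
  have h3 : (2 : ℝ) ^ (2 : ℝ) = 4 := by
    rw [show (2 : ℝ) = ((2 : ℕ) : ℝ) by norm_num, Real.rpow_natCast]; norm_num
  linarith

lemma pos_sub_one {s : ℝ} (hs : 2 ≤ s) (p : Nat.Primes) :
    (0 : ℝ) < ((p : ℕ) : ℝ) ^ s - 1 := by
  have := rpow_two_le hs p; linarith

lemma term_nonneg {s : ℝ} (hs : 2 ≤ s) (p : Nat.Primes) :
    (0 : ℝ) ≤ 1 / (((p : ℕ) : ℝ) ^ s - 1) := by
  have := pos_sub_one hs p; positivity

lemma term_le {s : ℝ} (hs : 2 ≤ s) (p : Nat.Primes) :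
    1 / (((p : ℕ) : ℝ) ^ s - 1) ≤ 2 * ((p : ℕ) : ℝ) ^ (-s) := by
  have h4 := rpow_two_le hs p
  have hpos : (0 : ℝ) < ((p : ℕ) : ℝ) ^ s := by linarith
  rw [Real.rpow_neg (by positivity), ← div_eq_mul_inv,
    div_le_div_iff₀ (pos_sub_one hs p) hpos]
  nlinarith

lemma summable_bound {s : ℝ} (hs : 2 ≤ s) :
    Summable (fun p : Nat.Primes => 2 * ((p : ℕ) : ℝ) ^ (-s)) :=
  (Nat.Primes.summable_rpow.mpr (by linarith)).mul_left 2

lemma summable_term {s : ℝ} (hs : 2 ≤ s) :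
    Summable (fun p : Nat.Primes => 1 / (((p : ℕ) : ℝ) ^ s - 1)) :=
  (summable_bound hs).of_nonneg_of_le (term_nonneg hs) (term_le hs)


/-- The prime 2 as an element of `Nat.Primes`. -/
def two : Nat.Primes := ⟨2, Nat.prime_two⟩

lemma cast_two : ((two : ℕ) : ℝ) = 2 := by norm_num [two]

/-- The comparison constant. -/
noncomputable def C : ℝ := ∑' p : Nat.Primes, 2 * ((p : ℕ) : ℝ) ^ (-2 : ℝ)

lemma primeSum_split {s : ℝ} (hs : 2 ≤ s) :
    primeSum s = 1 / ((2 : ℝ) ^ s - 1)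
      + ∑' p : Nat.Primes, if p = two then 0 else 1 / (((p : ℕ) : ℝ) ^ s - 1) := by
  have h := Summable.tsum_eq_add_tsum_ite (summable_term hs) two
  rw [primeSum, h, cast_two]

lemma three_le_cast {p : Nat.Primes} (hp : p ≠ two) : (3 : ℝ) ≤ ((p : ℕ) : ℝ) := by
  have h2 := p.2.two_le
  have hne : (p : ℕ) ≠ 2 := fun h => hp (Subtype.ext h)
  have : 3 ≤ (p : ℕ) := by omega
  exact_mod_cast this

lemma tail_le {s : ℝ} (hs : 2 ≤ s) :
    (∑' p : Nat.Primes, if p = two then 0 else 1 / (((p : ℕ) : ℝ) ^ s - 1))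
      ≤ (3 : ℝ) ^ (2 - s) * C := by
  have hsum2 : Summable (fun p : Nat.Primes => 2 * ((p : ℕ) : ℝ) ^ (-2 : ℝ)) :=
    (Nat.Primes.summable_rpow.mpr (by norm_num)).mul_left 2
  have hsumg : Summable (fun p : Nat.Primes =>
      (3 : ℝ) ^ (2 - s) * (2 * ((p : ℕ) : ℝ) ^ (-2 : ℝ))) := hsum2.mul_left _
  have hle : ∀ p : Nat.Primes,
      (if p = two then 0 else 1 / (((p : ℕ) : ℝ) ^ s - 1))
        ≤ (3 : ℝ) ^ (2 - s) * (2 * ((p : ℕ) : ℝ) ^ (-2 : ℝ)) := by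
    intro p
    have hp0 : (0 : ℝ) < ((p : ℕ) : ℝ) := by linarith [two_le_cast p]
    have hgpos : (0 : ℝ) ≤ (3 : ℝ) ^ (2 - s) * (2 * ((p : ℕ) : ℝ) ^ (-2 : ℝ)) := by
      positivity
    split_ifs with h
    · exact hgpos
    · calc 1 / (((p : ℕ) : ℝ) ^ s - 1) ≤ 2 * ((p : ℕ) : ℝ) ^ (-s) := term_le hs p
        _ = 2 * (((p : ℕ) : ℝ) ^ (-2 : ℝ) * ((p : ℕ) : ℝ) ^ (2 - s)) := by
            rw [← Real.rpow_add hp0]; ring_nf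
        _ ≤ 2 * (((p : ℕ) : ℝ) ^ (-2 : ℝ) * (3 : ℝ) ^ (2 - s)) := by
            have := Real.rpow_le_rpow_of_nonpos (by norm_num : (0:ℝ) < 3)
              (three_le_cast h) (by linarith : 2 - s ≤ 0)
            have hpn : (0:ℝ) ≤ ((p : ℕ) : ℝ) ^ (-2 : ℝ) := by positivity
            nlinarith
        _ = (3 : ℝ) ^ (2 - s) * (2 * ((p : ℕ) : ℝ) ^ (-2 : ℝ)) := by ring
  have hsumf : Summable (fun p : Nat.Primes =>
      if p = two then 0 else 1 / (((p : ℕ) : ℝ) ^ s - 1)) := by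
    refine (summable_term hs).of_nonneg_of_le (fun p => ?_) (fun p => ?_)
    · split_ifs with h
      · exact le_rfl
      · exact term_nonneg hs p
    · split_ifs with h
      · exact term_nonneg hs p
      · exact le_rfl
  calc (∑' p : Nat.Primes, if p = two then 0 else 1 / (((p : ℕ) : ℝ) ^ s - 1))
      ≤ ∑' p : Nat.Primes, (3 : ℝ) ^ (2 - s) * (2 * ((p : ℕ) : ℝ) ^ (-2 : ℝ)) :=
        Summable.tsum_le_tsum hle hsumf hsumg
    _ = (3 : ℝ) ^ (2 - s) * C := hsum2.tsum_mul_left _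

lemma one_le_main {s : ℝ} (hs : 2 ≤ s) : 1 ≤ (2 : ℝ) ^ s * primeSum s := by
  have h4 : (4 : ℝ) ≤ (2 : ℝ) ^ s := by simpa [cast_two] using rpow_two_le hs two
  have hhead : 1 / ((2 : ℝ) ^ s - 1) ≤ primeSum s := by
    have := Summable.le_tsum (summable_term hs) two (fun p _ => term_nonneg hs p)
    rwa [cast_two] at this
  have h1 : (2 : ℝ) ^ s * (1 / ((2 : ℝ) ^ s - 1)) ≤ (2 : ℝ) ^ s * primeSum s :=
    mul_le_mul_of_nonneg_left hhead (by positivity)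
  have h2 : (1 : ℝ) ≤ (2 : ℝ) ^ s * (1 / ((2 : ℝ) ^ s - 1)) := by
    rw [mul_one_div, le_div_iff₀ (by linarith)]
    linarith
  linarith

lemma main_le {s : ℝ} (hs : 2 ≤ s) :
    (2 : ℝ) ^ s * primeSum s
      ≤ (2 : ℝ) ^ s / ((2 : ℝ) ^ s - 1) + 9 * C * ((2 : ℝ) / 3) ^ s := by
  have h2pos : (0 : ℝ) < (2 : ℝ) ^ s := Real.rpow_pos_of_pos (by norm_num) s
  have h3pos : (0 : ℝ) < (3 : ℝ) ^ s := Real.rpow_pos_of_pos (by norm_num) s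
  have hkey : (2 : ℝ) ^ s * ((3 : ℝ) ^ (2 - s) * C) = 9 * C * ((2 : ℝ) / 3) ^ s := by
    rw [show (2 - s : ℝ) = 2 + -s by ring, Real.rpow_add (by norm_num : (0:ℝ) < 3),
      Real.rpow_neg (by norm_num : (0:ℝ) ≤ 3),
      Real.div_rpow (by norm_num : (0:ℝ) ≤ 2) (by norm_num : (0:ℝ) ≤ 3),
      show (3 : ℝ) ^ (2 : ℝ) = 9 by
        rw [show (2 : ℝ) = ((2 : ℕ) : ℝ) by norm_num, Real.rpow_natCast]; norm_num]
    field_simp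
  calc (2 : ℝ) ^ s * primeSum s
      = (2 : ℝ) ^ s * (1 / ((2 : ℝ) ^ s - 1))
        + (2 : ℝ) ^ s * ∑' p : Nat.Primes,
            if p = two then 0 else 1 / (((p : ℕ) : ℝ) ^ s - 1) := by
        rw [primeSum_split hs, mul_add]
    _ ≤ (2 : ℝ) ^ s / ((2 : ℝ) ^ s - 1) + (2 : ℝ) ^ s * ((3 : ℝ) ^ (2 - s) * C) := by
        rw [mul_one_div]
        exact add_le_add le_rfl (mul_le_mul_of_nonneg_left (tail_le hs) h2pos.le)
    _ = (2 : ℝ) ^ s / ((2 : ℝ) ^ s - 1) + 9 * C * ((2 : ℝ) / 3) ^ s := by rw [hkey]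

lemma tendsto_two_rpow : Tendsto (fun s : ℝ => (2 : ℝ) ^ s) atTop atTop := by
  have h : Tendsto (fun s : ℝ => Real.exp (Real.log 2 * s)) atTop atTop :=
    Real.tendsto_exp_atTop.comp (tendsto_id.const_mul_atTop (Real.log_pos one_lt_two))
  refine h.congr fun s => ?_
  rw [Real.rpow_def_of_pos (by norm_num : (0:ℝ) < 2)]

lemma tendsto_upper :
    Tendsto (fun s : ℝ => (2 : ℝ) ^ s / ((2 : ℝ) ^ s - 1) + 9 * C * ((2 : ℝ) / 3) ^ s)
      atTop (nhds 1) := by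
  have hA : Tendsto (fun x : ℝ => x / (x - 1)) atTop (nhds 1) := by
    have h0 : Tendsto (fun x : ℝ => 1 + (x - 1)⁻¹) atTop (nhds (1 + 0)) :=
      tendsto_const_nhds.add
        (tendsto_inv_atTop_zero.comp (tendsto_atTop_add_const_right _ (-1) tendsto_id))
    rw [add_zero] at h0
    refine h0.congr' ?_
    filter_upwards [eventually_gt_atTop (1 : ℝ)] with x hx
    have hne : x - 1 ≠ 0 := sub_ne_zero.mpr hx.ne'
    field_simp
    ring
  have h1 : Tendsto (fun s : ℝ => (2 : ℝ) ^ s / ((2 : ℝ) ^ s - 1)) atTop (nhds 1) :=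
    hA.comp tendsto_two_rpow
  have h2 : Tendsto (fun s : ℝ => 9 * C * ((2 : ℝ) / 3) ^ s) atTop (nhds (9 * C * 0)) :=
    (tendsto_rpow_atTop_of_base_lt_one (2 / 3) (by norm_num) (by norm_num)).const_mul _
  rw [mul_zero] at h2
  simpa using h1.add h2

end ZetaAux10

theorem zeta_stmt_10 :
    Tendsto (fun s : ℝ => (2 : ℝ) ^ s * primeSum s) atTop (nhds 1) := by
  refine tendsto_of_tendsto_of_tendsto_of_le_of_le'
    (tendsto_const_nhds : Tendsto (fun _ : ℝ => (1 : ℝ)) atTop (nhds 1))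
    ZetaAux10.tendsto_upper ?_ ?_
  · filter_upwards [eventually_ge_atTop (2 : ℝ)] with s hs
    exact ZetaAux10.one_le_main hs
  · filter_upwards [eventually_ge_atTop (2 : ℝ)] with s hs
    exact ZetaAux10.main_le hs
end

section
/- Let k be a nonzero integer and set s = 1 + 2πik/log 2 (a complex number on the line Re(s) = 1). Then the alternating zeta (Dirichlet eta) series vanishes at s in the sense of convergence of partial sums: lim_{N→∞} Σ_{n=1}^{N} (−1)^(n−1) · n^(−s) = 0. -/
open Filter Set

private lemma zeta13_tendsto_even_odd {a : ℕ → ℂ} {L : ℂ}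
    (he : Tendsto (fun n => a (2*n)) atTop (nhds L))
    (ho : Tendsto (fun n => a (2*n+1)) atTop (nhds L)) :
    Tendsto a atTop (nhds L) := by
  rw [Metric.tendsto_atTop] at he ho ⊢
  intro ε hε
  obtain ⟨N1, h1⟩ := he ε hε
  obtain ⟨N2, h2⟩ := ho ε hε
  refine ⟨2*N1 + 2*N2 + 2, fun n hn => ?_⟩
  rcases Nat.even_or_odd n with ⟨m, hm⟩ | ⟨m, hm⟩
  · have : n = 2*m := by omega
    rw [this]; exact h1 m (by omega)
  · have : n = 2*m+1 := by omega
    rw [this]; exact h2 m (by omega)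

private lemma zeta13_pair_sum (b : ℕ → ℂ) (N : ℕ) :
    ∑ n ∈ Finset.range (2*N), (-1:ℂ)^n * b n
      = ∑ n ∈ Finset.range (2*N), b n - 2 * ∑ m ∈ Finset.range N, b (2*m+1) := by
  induction N with
  | zero => simp
  | succ N ih =>
    have h2N : 2*(N+1) = 2*N+1+1 := by ring
    rw [h2N]
    simp only [Finset.sum_range_succ]
    rw [ih]
    have e1 : (-1:ℂ)^(2*N) = 1 := by simp [pow_mul]
    have e2 : (-1:ℂ)^(2*N+1) = -1 := by simp [pow_succ, pow_mul]
    rw [e1, e2]; ring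

/-- The analytic core: if `s` has real part 1, `s ≠ 0`, `s ≠ 1` and `2 ^ (1-s) = 1`,
then the eta partial sums tend to `0`. -/
private lemma zeta13_core (s : ℂ) (hsre : s.re = 1) (hs0 : s ≠ 0)
    (hsne1 : -s ≠ -1) (hs1 : (-s) + 1 ≠ 0) (h2 : (2:ℂ) ^ (-s + 1) = 1) :
    Tendsto (fun N : ℕ => ∑ n ∈ Finset.range N, (-1:ℂ)^n * ((n:ℂ)+1) ^ (-s))
      atTop (nhds 0) := by
  set a : ℕ → ℂ := fun n => ((n:ℂ)+1) ^ (-s) with ha_def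
  set f : ℝ → ℂ := fun x => (x:ℂ) ^ (-s) with hf_def
  set g : ℝ → ℂ := fun x => (x:ℂ) ^ (-s + 1) / (-s + 1) with hg_def
  have haf : ∀ n : ℕ, a n = f ((n:ℝ)+1) := by
    intro n; simp only [ha_def, hf_def]; norm_cast
  -- derivative of g is f
  have hg' : ∀ x : ℝ, x ≠ 0 → HasDerivAt g (f x) x := fun x hx =>
    hasDerivAt_ofReal_cpow_const' hx hsne1
  -- derivative of f
  have hf' : ∀ x : ℝ, x ≠ 0 → HasDerivAt f (-s * (x:ℂ) ^ (-s - 1)) x := by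
    intro x hx
    have hr : (-s - 1 : ℂ) ≠ -1 := by
      intro h; apply hs0; linear_combination -h
    have h := (hasDerivAt_ofReal_cpow_const' hx hr).const_mul (-s)
    have he : (-s - 1 + 1 : ℂ) = -s := by ring
    rw [he] at h
    have hfun : (fun y : ℝ => -s * ((y:ℂ) ^ (-s) / -s)) = f := by
      funext y
      simp only [hf_def]
      rw [mul_comm, div_mul_cancel₀ _ (neg_ne_zero.mpr hs0)]
    rw [hfun] at h; exact h
  -- the key per-step estimate
  have key : ∀ n : ℕ, 1 ≤ n →
      ‖f ((n:ℝ)+1) - (g ((n:ℝ)+1) - g (n:ℝ))‖ ≤ ‖s‖ * (n:ℝ) ^ (-2:ℝ) := by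
    intro n hn
    have hn0 : (0:ℝ) < n := by exact_mod_cast hn
    set Ic : Set ℝ := Icc (n:ℝ) ((n:ℝ)+1) with hIc
    have hpos : ∀ x ∈ Ic, (0:ℝ) < x := fun x hx => lt_of_lt_of_le hn0 hx.1
    have hCnn : (0:ℝ) ≤ ‖s‖ * (n:ℝ) ^ (-2:ℝ) := by positivity
    have hC : ∀ x ∈ Ic, ‖-s * (x:ℂ) ^ (-s - 1)‖ ≤ ‖s‖ * (n:ℝ) ^ (-2:ℝ) := by
      intro x hx
      have hx0 : (0:ℝ) < x := hpos x hx
      rw [norm_mul, norm_neg,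
        Complex.norm_cpow_eq_rpow_re_of_pos hx0]
      have hre : (-s - 1 : ℂ).re = (-2:ℝ) := by
        rw [Complex.sub_re, Complex.neg_re, hsre]; norm_num
      rw [hre]
      exact mul_le_mul_of_nonneg_left
        (Real.rpow_le_rpow_of_nonpos hn0 hx.1 (by norm_num)) (norm_nonneg s)
    have hmem1 : ((n:ℝ)+1) ∈ Ic := by constructor <;> simp
    have hmem0 : (n:ℝ) ∈ Ic := by constructor <;> simp
    -- MVT for f
    have mvt1 : ∀ x ∈ Ic, ‖f x - f ((n:ℝ)+1)‖ ≤ ‖s‖ * (n:ℝ) ^ (-2:ℝ) := by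
      intro x hx
      have := (convex_Icc (n:ℝ) ((n:ℝ)+1)).norm_image_sub_le_of_norm_hasDerivWithin_le
        (f' := fun x : ℝ => -s * (x:ℂ) ^ (-s - 1))
        (fun y hy => (hf' y (ne_of_gt (hpos y hy))).hasDerivWithinAt) hC hmem1 hx
      refine this.trans ?_
      have hb : ‖x - ((n:ℝ)+1)‖ ≤ 1 := by
        rw [Real.norm_eq_abs, abs_le]
        exact ⟨by linarith [hx.1, hx.2], by linarith [hx.1, hx.2]⟩
      calc ‖s‖ * (n:ℝ) ^ (-2:ℝ) * ‖x - ((n:ℝ)+1)‖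
          ≤ ‖s‖ * (n:ℝ) ^ (-2:ℝ) * 1 := by gcongr
        _ = ‖s‖ * (n:ℝ) ^ (-2:ℝ) := by ring
    -- MVT for φ = g - c * id
    set c : ℂ := f ((n:ℝ)+1) with hc
    have hφ : ∀ x ∈ Ic, HasDerivWithinAt (fun y : ℝ => g y - c * y) (f x - c) Ic x := by
      intro x hx
      have h1 : HasDerivWithinAt g (f x) Ic x :=
        (hg' x (ne_of_gt (hpos x hx))).hasDerivWithinAt
      have h2' : HasDerivWithinAt (fun y : ℝ => c * (y:ℂ)) c Ic x := by
        simpa using ((Complex.ofRealCLM.hasDerivAt (x := x)).const_mul c).hasDerivWithinAt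
      exact h1.sub h2'
    have mvt2 := (convex_Icc (n:ℝ) ((n:ℝ)+1)).norm_image_sub_le_of_norm_hasDerivWithin_le
      (f' := fun x => f x - c) hφ (fun x hx => mvt1 x hx) hmem0 hmem1
    have hnorm1 : ‖((n:ℝ)+1) - (n:ℝ)‖ = 1 := by simp
    rw [hnorm1, mul_one] at mvt2
    refine le_trans (le_of_eq ?_) mvt2
    rw [← norm_neg]
    congr 1
    push_cast
    ring
  -- telescoping + cancellation
  have hg2 : ∀ N : ℕ, g ((2*N : ℕ):ℝ) = g ((N:ℕ):ℝ) := by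
    intro N
    simp only [hg_def]
    congr 1
    have hcast : (((2*N : ℕ):ℝ):ℂ) = (((2:ℝ):ℂ)) * (((N:ℝ)):ℂ) := by push_cast; ring
    rw [hcast, Complex.mul_cpow_ofReal_nonneg (by norm_num) (Nat.cast_nonneg N)]
    rw [show (((2:ℝ)):ℂ) = (2:ℂ) by norm_num, h2, one_mul]
  -- the middle block sums tend to zero
  have even0 : Tendsto (fun N : ℕ => ∑ n ∈ Finset.Ico N (2*N), a n) atTop (nhds 0) := by
    apply squeeze_zero_norm' (a := fun N : ℕ => ‖s‖ / (N:ℝ))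
    · filter_upwards [eventually_ge_atTop 1] with N hN
      have htel : ∑ n ∈ Finset.Ico N (2*N), (g ((n:ℝ)+1) - g (n:ℝ)) = 0 := by
        have h1 : ∀ K : ℕ, ∑ n ∈ Finset.range K, (g ((n:ℝ)+1) - g (n:ℝ))
            = g ((K:ℕ):ℝ) - g ((0:ℕ):ℝ) := by
          intro K
          have := Finset.sum_range_sub (fun n : ℕ => g ((n:ℕ):ℝ)) K
          push_cast at this ⊢
          exact this
        rw [Finset.sum_Ico_eq_sub _ (by omega), h1, h1, hg2 N]
        ring
      have hsum : ∑ n ∈ Finset.Ico N (2*N), a n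
          = ∑ n ∈ Finset.Ico N (2*N), (f ((n:ℝ)+1) - (g ((n:ℝ)+1) - g (n:ℝ))) := by
        rw [Finset.sum_sub_distrib, htel, sub_zero]
        exact Finset.sum_congr rfl fun n _ => haf n
      rw [hsum]
      calc ‖∑ n ∈ Finset.Ico N (2*N), (f ((n:ℝ)+1) - (g ((n:ℝ)+1) - g (n:ℝ)))‖
          ≤ ∑ n ∈ Finset.Ico N (2*N), ‖f ((n:ℝ)+1) - (g ((n:ℝ)+1) - g (n:ℝ))‖ :=
            norm_sum_le _ _
        _ ≤ ∑ _n ∈ Finset.Ico N (2*N), ‖s‖ * (N:ℝ) ^ (-2:ℝ) := by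
            apply Finset.sum_le_sum
            intro n hn
            rw [Finset.mem_Ico] at hn
            refine (key n (le_trans hN hn.1)).trans ?_
            exact mul_le_mul_of_nonneg_left
              (Real.rpow_le_rpow_of_nonpos (by exact_mod_cast hN)
                (by exact_mod_cast hn.1) (by norm_num)) (norm_nonneg s)
        _ = (N:ℝ) * (‖s‖ * (N:ℝ) ^ (-2:ℝ)) := by
            rw [Finset.sum_const, Nat.card_Ico]
            have : 2*N - N = N := by omega
            rw [this]; simp [nsmul_eq_mul]
        _ = ‖s‖ / (N:ℝ) := by
            have hN0 : (0:ℝ) < (N:ℝ) := by exact_mod_cast hN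
            rw [Real.rpow_neg (le_of_lt hN0), show (2:ℝ) = ((2:ℕ):ℝ) by norm_num,
              Real.rpow_natCast]
            field_simp
    · exact tendsto_const_div_atTop_nhds_zero_nat _
  -- individual terms tend to zero
  have hnorm_a : ∀ n : ℕ, ‖a n‖ = ((n:ℝ)+1)⁻¹ := by
    intro n
    rw [haf n, hf_def]
    simp only
    rw [Complex.norm_cpow_eq_rpow_re_of_pos (by positivity)]
    rw [show (-s).re = (-1:ℝ) by simp [hsre]]
    rw [Real.rpow_neg_one]
  have ha0 : Tendsto a atTop (nhds 0) := by
    apply squeeze_zero_norm (a := fun n : ℕ => ((n:ℝ)+1)⁻¹)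
      (fun n => le_of_eq (hnorm_a n))
    exact Tendsto.inv_tendsto_atTop
      (tendsto_atTop_add_const_right _ _ tendsto_natCast_atTop_atTop)
  -- even partial sums
  set S : ℕ → ℂ := fun N => ∑ n ∈ Finset.range N, (-1:ℂ)^n * a n with hS
  have heven : ∀ N : ℕ, S (2*N) = ∑ n ∈ Finset.Ico N (2*N), a n := by
    intro N
    have hodd_term : ∀ m : ℕ, a (2*m+1) = (2:ℂ)^(-s) * a m := by
      intro m
      simp only [ha_def]
      have hcast : ((2*m+1 : ℕ):ℂ) + 1 = (((2:ℝ)):ℂ) * ((((m:ℝ)+1):ℝ):ℂ) := by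
        push_cast; ring
      rw [hcast, Complex.mul_cpow_ofReal_nonneg (by norm_num) (by positivity)]
      norm_num
    have h22 : (2:ℂ) * (2:ℂ)^(-s) = 1 := by
      rw [← h2, Complex.cpow_add _ _ (by norm_num : (2:ℂ) ≠ 0), Complex.cpow_one]
      ring
    rw [hS]
    simp only
    rw [zeta13_pair_sum a N]
    have : 2 * ∑ m ∈ Finset.range N, a (2*m+1) = ∑ m ∈ Finset.range N, a m := by
      rw [Finset.mul_sum]
      refine Finset.sum_congr rfl fun m _ => ?_
      rw [hodd_term m, ← mul_assoc, h22, one_mul]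
    rw [this, Finset.sum_Ico_eq_sub _ (by omega)]
  have he : Tendsto (fun N => S (2*N)) atTop (nhds 0) := by
    simp only [heven]
    exact even0
  have ho : Tendsto (fun N => S (2*N+1)) atTop (nhds 0) := by
    have hstep : ∀ N : ℕ, S (2*N+1) = S (2*N) + a (2*N) := by
      intro N
      rw [hS]
      simp only
      rw [Finset.sum_range_succ]
      have : (-1:ℂ)^(2*N) = 1 := by simp [pow_mul]
      rw [this, one_mul]
    simp only [hstep]
    have h2n : Tendsto (fun N : ℕ => a (2*N)) atTop (nhds 0) := by
      apply ha0.comp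
      apply tendsto_atTop_atTop.mpr
      exact fun b => ⟨b, fun n hn => by omega⟩
    simpa using he.add h2n
  exact zeta13_tendsto_even_odd he ho

theorem zeta_stmt_13 (k : ℤ) (hk : k ≠ 0) :
    Tendsto
      (fun N : ℕ => ∑ n ∈ Finset.range N,
        (-1 : ℂ) ^ n * ((n : ℂ) + 1) ^
          (-(1 + 2 * Real.pi * Complex.I * k / Real.log 2)))
      atTop (nhds 0) := by
  have hlog : Real.log 2 ≠ 0 := by
    have := Real.log_pos (by norm_num : (1:ℝ) < 2); linarith
  have hlogC : ((Real.log 2 : ℝ) : ℂ) ≠ 0 := by exact_mod_cast hlog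
  set θ : ℝ := 2 * Real.pi * k / Real.log 2 with hθ
  have hθ0 : θ ≠ 0 :=
    div_ne_zero (mul_ne_zero (mul_ne_zero two_ne_zero Real.pi_ne_zero)
      (Int.cast_ne_zero.mpr hk)) hlog
  set s : ℂ := 1 + 2 * Real.pi * Complex.I * k / Real.log 2 with hs
  have hsθ : s = 1 + (θ:ℂ) * Complex.I := by
    rw [hs, hθ]; push_cast; field_simp
  have hsre : s.re = 1 := by rw [hsθ]; simp
  have hsim : s.im = θ := by rw [hsθ]; simp
  have hs0 : s ≠ 0 := by
    intro h; rw [h] at hsre; simp at hsre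
  have hsne1 : -s ≠ -1 := by
    intro h
    have : s = 1 := by linear_combination -h
    rw [this] at hsim; simp at hsim; exact hθ0 hsim.symm
  have hs1 : (-s) + 1 ≠ 0 := by
    intro h
    have : s = 1 := by linear_combination -h
    rw [this] at hsim; simp at hsim; exact hθ0 hsim.symm
  have hl2 : Complex.log 2 = ((Real.log 2 : ℝ) : ℂ) := by
    rw [show (2:ℂ) = ((2:ℝ):ℂ) by norm_num, ← Complex.ofReal_log (by norm_num)]
  have h2 : (2:ℂ) ^ ((-s) + 1) = 1 := by
    rw [Complex.cpow_def_of_ne_zero (by norm_num), Complex.exp_eq_one_iff]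
    refine ⟨-k, ?_⟩
    have hlC : Complex.log 2 ≠ 0 := by rw [hl2]; exact hlogC
    rw [hs]
    push_cast
    field_simp [hlC]
    rw [hl2]
    ring
  exact zeta13_core s hsre hs0 hsne1 hs1 h2
end
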